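/- arXiv:2106.00513 — 3 statements merged into one kernel-verified Lean document; each statement's English description precedes it below -/
import Mathlib

section
/- Let n be a positive integer and let M₁ be a perfect matching of the balanced papillon graph P_n with |M₁ ∩ X| = 2, where X is the principal 4-edge-cut of P_n. Then there exists a perfect matching M₂ of P_n such that |M₂ ∩ X| = 2 and M₁ ∩ M₂ = ∅. -/
set_option linter.unusedVariables false
set_option maxHeartbeats 1000000

open SimpleGraph

/-- Vertices of the papillon graph `P_{r,ℓ}`: `(false, i)` is the outer vertex `u_i`
and `(true, i)` is the inner vertex `v_i`, where indices are taken in `ZMod (2(r+ℓ))`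
(so the 1-based index `i ∈ {1, …, 2(r+ℓ)}` corresponds to `i mod 2(r+ℓ)`). -/
abbrev PapVert (N : ℕ) : Type := Bool × ZMod N

/-- The outer vertex `u_i` (1-based index `i`). -/
def pu (N : ℕ) (i : ℕ) : PapVert N := (false, (i : ZMod N))

/-- The inner vertex `v_i` (1-based index `i`). -/
def pv (N : ℕ) (i : ℕ) : PapVert N := (true, (i : ZMod N))

/-- The edge set of the papillon graph `P_{r,ℓ}`: the outer-cycle edges, the spokes,
and the inner-cycle edges. -/
def papillonEdges (r l : ℕ) : Set (Sym2 (PapVert (2 * (r + l)))) :=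
  {e | (∃ i, 1 ≤ i ∧ i ≤ 2 * (r + l) - 1 ∧
          e = s(pu (2 * (r + l)) i, pu (2 * (r + l)) (i + 1)))
      ∨ e = s(pu (2 * (r + l)) (2 * (r + l)), pu (2 * (r + l)) 1)
      ∨ (∃ i, 1 ≤ i ∧ i ≤ 2 * (r + l) ∧
          e = s(pu (2 * (r + l)) i, pv (2 * (r + l)) i))
      ∨ (∃ i, 1 ≤ i ∧ i ≤ r + l ∧
          e = s(pv (2 * (r + l)) (2 * i - 1), pv (2 * (r + l)) (2 * i)))
      ∨ (∃ i, 1 ≤ i ∧ i ≤ r + l - 1 ∧ i ≠ min r l ∧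
          e = s(pv (2 * (r + l)) (2 * i - 1), pv (2 * (r + l)) (2 * i + 2)))
      ∨ e = s(pv (2 * (r + l)) 2, pv (2 * (r + l)) (2 * min r l + 2))
      ∨ e = s(pv (2 * (r + l)) (2 * min r l - 1), pv (2 * (r + l)) (2 * (r + l) - 1))}

/-- The papillon graph `P_{r,ℓ}`. -/
def papillon (r l : ℕ) : SimpleGraph (PapVert (2 * (r + l))) :=
  SimpleGraph.fromEdgeSet (papillonEdges r l)


/-- `M` is a perfect matching of `G`, viewed as a set of edges: every vertex lies on
exactly one edge of `M`. -/
def IsPerfMatching {V : Type*} (G : SimpleGraph V) (M : Set (Sym2 V)) : Prop :=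
  M ⊆ G.edgeSet ∧ ∀ v : V, ∃! e, e ∈ M ∧ v ∈ e

/-- `F` is (the edge set of) a 2-factor of `G`: a spanning subgraph in which every
vertex is incident with exactly two edges of `F`. -/
def Is2Factor {V : Type*} (G : SimpleGraph V) (F : Set (Sym2 V)) : Prop :=
  F ⊆ G.edgeSet ∧ ∀ v : V, ∃ e₁ e₂, e₁ ≠ e₂ ∧ e₁ ∈ F ∧ e₂ ∈ F ∧ v ∈ e₁ ∧ v ∈ e₂ ∧
    ∀ e ∈ F, v ∈ e → e = e₁ ∨ e = e₂

/-- Every cycle of `G` all of whose edges lie in `F` has even length. -/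
def HasOnlyEvenCycles {V : Type*} (G : SimpleGraph V) (F : Set (Sym2 V)) : Prop :=
  ∀ (x : V) (c : G.Walk x x), c.IsCycle → (∀ e ∈ c.edges, e ∈ F) → Even c.length

/-- `G` is even-2-factorable: every 2-factor of `G` contains only even cycles. -/
def IsE2F {V : Type*} (G : SimpleGraph V) : Prop :=
  ∀ F, Is2Factor G F → HasOnlyEvenCycles G F

/-- `S` is the edge set of a Hamiltonian cycle of `G`. -/
def IsHamCycleSet {V : Type*} [DecidableEq V] (G : SimpleGraph V) (S : Set (Sym2 V)) : Prop :=
  ∃ (x : V) (c : G.Walk x x), c.IsHamiltonianCycle ∧ S = {e | e ∈ c.edges}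

/-- `G` has the Perfect-Matching-Hamiltonian property. -/
def HasPMH {V : Type*} [DecidableEq V] (G : SimpleGraph V) : Prop :=
  ∀ M, IsPerfMatching G M → ∃ N, IsPerfMatching G N ∧ IsHamCycleSet G (M ∪ N)

/-- The principal 4-edge-cut `X = {a, b, c, d}` of the balanced papillon graph `P_n`,
where `a = u₁u_{4n}`, `b = v_{2n-1}v_{4n-1}`, `c = v₂v_{2n+2}`, `d = u_{2n}u_{2n+1}`. -/
def Xcut (n : ℕ) : Set (Sym2 (PapVert (2 * (n + n)))) :=
  {s(pu (2 * (n + n)) 1, pu (2 * (n + n)) (4 * n)),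
   s(pv (2 * (n + n)) (2 * n - 1), pv (2 * (n + n)) (4 * n - 1)),
   s(pv (2 * (n + n)) 2, pv (2 * (n + n)) (2 * n + 2)),
   s(pu (2 * (n + n)) (2 * n), pu (2 * (n + n)) (2 * n + 1))}

/-- The vertex set `{u_{2j-1}, u_{2j}, v_{2j-1}, v_{2j}}` of the 4-pole `T_j` of `P_n`. -/
def Tverts (n j : ℕ) : Set (PapVert (2 * (n + n))) :=
  {pu (2 * (n + n)) (2 * j - 1), pu (2 * (n + n)) (2 * j),
   pv (2 * (n + n)) (2 * j - 1), pv (2 * (n + n)) (2 * j)}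

/-- `∂T_j`: the set of edges of `P_n` with exactly one endpoint in
`{u_{2j-1}, u_{2j}, v_{2j-1}, v_{2j}}`. -/
def boundaryT (n j : ℕ) : Set (Sym2 (PapVert (2 * (n + n)))) :=
  {e | e ∈ (papillon n n).edgeSet ∧ ∃ x y, e = s(x, y) ∧ x ∈ Tverts n j ∧ y ∉ Tverts n j}


namespace PapAux
variable {n : ℕ}

/-- spoke partner -/
def spk {m : ℕ} (x : PapVert m) : PapVert m := (!x.1, x.2)

/-- pole-internal (non-spoke) partner -/
def intp {m : ℕ} (x : PapVert m) : PapVert m :=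
  (x.1, if x.2.val % 2 = 0 then x.2 + ((m - 1 : ℕ) : ZMod m) else x.2 + ((1 : ℕ) : ZMod m))

/-- boundary partner -/
def bdp (n : ℕ) (x : PapVert (2*(n+n))) : PapVert (2*(n+n)) :=
  (x.1,
   if x.1 = false then
     (if x.2.val % 2 = 0 then x.2 + ((1:ℕ) : ZMod (2*(n+n)))
      else x.2 + ((2*(n+n) - 1 : ℕ) : ZMod (2*(n+n))))
   else
     if x.2.val % 2 = 0 then
       (if x.2 = ((2:ℕ) : ZMod (2*(n+n))) then ((2*n+2 : ℕ) : ZMod (2*(n+n)))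
        else if x.2 = ((2*n+2:ℕ) : ZMod (2*(n+n))) then ((2:ℕ) : ZMod (2*(n+n)))
        else x.2 + ((2*(n+n) - 3 : ℕ) : ZMod (2*(n+n))))
     else
       (if x.2 = ((2*n-1:ℕ) : ZMod (2*(n+n))) then ((2*(n+n)-1 : ℕ) : ZMod (2*(n+n)))
        else if x.2 = ((2*(n+n)-1:ℕ) : ZMod (2*(n+n))) then ((2*n-1:ℕ) : ZMod (2*(n+n)))
        else x.2 + ((3:ℕ) : ZMod (2*(n+n)))))

lemma cast_eq_cast (hn : 1 ≤ n) {a b : ℕ}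
    (h : a = b ∨ a = b + 2*(n+n) ∨ a + 2*(n+n) = b) :
    (a : ZMod (2*(n+n))) = (b : ZMod (2*(n+n))) := by
  have h0 : ((2*(n+n) : ℕ) : ZMod (2*(n+n))) = 0 := ZMod.natCast_self _
  rcases h with rfl | rfl | h
  · rfl
  · rw [Nat.cast_add, h0, add_zero]
  · rw [← h, Nat.cast_add, h0, add_zero]

lemma val_cast_lt (hn : 1 ≤ n) {a : ℕ} (h : a < 2*(n+n)) : ((a : ZMod (2*(n+n)))).val = a :=
  ZMod.val_cast_of_lt h

lemma cast_inj (hn : 1 ≤ n) {a b : ℕ} (ha : a < 2*(n+n)) (hb : b < 2*(n+n)) :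
    ((a : ZMod (2*(n+n))) = (b : ZMod (2*(n+n)))) ↔ a = b := by
  constructor
  · intro h
    have := congrArg ZMod.val h
    rwa [ZMod.val_cast_of_lt ha, ZMod.val_cast_of_lt hb] at this
  · rintro rfl; rfl

lemma val_parity (hn : 1 ≤ n) (a : ℕ) :
    ((a : ZMod (2*(n+n))).val) % 2 = a % 2 := by
  rw [ZMod.val_natCast, Nat.mod_mod_of_dvd _ ⟨n+n, by ring⟩]

lemma self_cast (hn : 1 ≤ n) (m : ZMod (2*(n+n))) : ((m.val : ℕ) : ZMod (2*(n+n))) = m := by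
  haveI : NeZero (2*(n+n)) := ⟨by omega⟩
  exact ZMod.natCast_zmod_val m

lemma resolve {α : Type*} {f : α → α} (hf : ∀ y, f (f y) = y) {x w : α} {e : Sym2 α}
    (he : e = s(x, f x)) (hw : w ∈ e) : e = s(w, f w) := by
  subst he
  rcases Sym2.mem_iff.1 hw with rfl | rfl
  · rfl
  · rw [hf]; exact Sym2.eq_swap

end PapAux
section PartB
namespace PapAux
variable {n : ℕ}

lemma val_lt' (hn : 1 ≤ n) (m : ZMod (2*(n+n))) : m.val < 2*(n+n) := by
  haveI : NeZero (2*(n+n)) := ⟨by omega⟩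
  exact ZMod.val_lt m

lemma val_add (hn : 1 ≤ n) (m : ZMod (2*(n+n))) (k : ℕ) :
    (m + (k : ZMod (2*(n+n)))).val = (m.val + k) % (2*(n+n)) := by
  conv_lhs => rw [← self_cast hn m, ← Nat.cast_add]
  rw [ZMod.val_natCast]

lemma parity_add (hn : 1 ≤ n) (m : ZMod (2*(n+n))) (k : ℕ) :
    (m + (k : ZMod (2*(n+n)))).val % 2 = (m.val + k) % 2 := by
  rw [val_add hn, Nat.mod_mod_of_dvd _ ⟨n+n, by ring⟩]

lemma add_add_cancel (hn : 1 ≤ n) (m : ZMod (2*(n+n))) (a b : ℕ) (h : a + b = 2*(n+n)) :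
    m + (a : ZMod (2*(n+n))) + (b : ZMod (2*(n+n))) = m := by
  rw [add_assoc, ← Nat.cast_add, h, ZMod.natCast_self, add_zero]

lemma cast_add_cast (a b : ℕ) :
    (a : ZMod (2*(n+n))) + (b : ZMod (2*(n+n))) = ((a + b : ℕ) : ZMod (2*(n+n))) :=
  (Nat.cast_add a b).symm

lemma add_cast_ne (hn : 1 ≤ n) (m : ZMod (2*(n+n))) {a : ℕ} (h0 : 0 < a)
    (hN : a < 2*(n+n)) : m + (a : ZMod (2*(n+n))) ≠ m := by
  intro h
  have h2 : m + (a : ZMod (2*(n+n))) = m + ((0:ℕ) : ZMod (2*(n+n))) := by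
    rw [h]; simp
  have h3 := add_left_cancel h2
  rw [cast_inj hn hN (by omega)] at h3
  omega

lemma ne_of_val_parity (hn : 1 ≤ n) {u v : ZMod (2*(n+n))}
    (h : u.val % 2 ≠ v.val % 2) : u ≠ v := fun h' => h (by rw [h'])

lemma spk_invol {m : ℕ} (x : PapVert m) : spk (spk x) = x := by
  obtain ⟨b, m⟩ := x; simp [spk]

lemma spk_ne {m : ℕ} (x : PapVert m) : spk x ≠ x := by
  obtain ⟨b, m⟩ := x; simp [spk]

lemma spk_intp {m : ℕ} (x : PapVert m) : spk (intp x) = intp (spk x) := by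
  obtain ⟨b, m⟩ := x; rfl

lemma spk_fst {m : ℕ} (x : PapVert m) : (spk x).1 = !x.1 := rfl
lemma intp_fst {m : ℕ} (x : PapVert m) : (intp x).1 = x.1 := rfl
lemma bdp_fst (x : PapVert (2*(n+n))) : (bdp n x).1 = x.1 := rfl

lemma spk_ne_intp {m : ℕ} (x : PapVert m) : spk x ≠ intp x := by
  intro h; have := congrArg Prod.fst h
  rw [spk_fst, intp_fst] at this
  simp at this

lemma spk_ne_bdp (x : PapVert (2*(n+n))) : spk x ≠ bdp n x := by
  intro h; have := congrArg Prod.fst h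
  rw [spk_fst, bdp_fst] at this
  simp at this

lemma intp_invol (hn : 1 ≤ n) (x : PapVert (2*(n+n))) : intp (intp x) = x := by
  obtain ⟨b, m⟩ := x
  have he := val_lt' hn m
  by_cases hp : m.val % 2 = 0
  · have h1 : intp (b, m) = (b, m + ((2*(n+n)-1 : ℕ) : ZMod (2*(n+n)))) := by
      simp [intp, hp]
    rw [h1]
    have hp2 : (m + ((2*(n+n)-1 : ℕ) : ZMod (2*(n+n)))).val % 2 ≠ 0 := by
      rw [parity_add hn]; omega
    simp only [intp, if_neg hp2]
    rw [add_add_cancel hn m _ _ (by omega)]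
  · have h1 : intp (b, m) = (b, m + ((1:ℕ) : ZMod (2*(n+n)))) := by
      simp [intp, hp]
    rw [h1]
    have hp2 : (m + ((1:ℕ) : ZMod (2*(n+n)))).val % 2 = 0 := by
      rw [parity_add hn]; omega
    simp only [intp, if_pos hp2]
    rw [add_add_cancel hn m _ _ (by omega)]

lemma intp_ne (hn : 1 ≤ n) (x : PapVert (2*(n+n))) : intp x ≠ x := by
  obtain ⟨b, m⟩ := x
  intro h
  by_cases hp : m.val % 2 = 0
  · simp only [intp, if_pos hp, Prod.mk.injEq] at h
    exact add_cast_ne hn m (a := 2*(n+n)-1) (by omega) (by omega) h.2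
  · simp only [intp, if_neg hp, Prod.mk.injEq] at h
    exact add_cast_ne hn m (a := 1) (by omega) (by omega) h.2

end PapAux
end PartB
section PartC
namespace PapAux
variable {n : ℕ}

lemma eq_cast_iff_val (hn : 1 ≤ n) (m : ZMod (2*(n+n))) {a : ℕ} (ha : a < 2*(n+n)) :
    m = (a : ZMod (2*(n+n))) ↔ m.val = a := by
  constructor
  · rintro rfl; exact val_cast_lt hn ha
  · intro h; rw [← h, self_cast hn m]

lemma eq_cast2n2_iff (hn : 1 ≤ n) (m : ZMod (2*(n+n))) :
    m = ((2*n+2:ℕ) : ZMod (2*(n+n))) ↔ (m.val = 2*n+2 ∨ (n = 1 ∧ m.val = 0)) := by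
  by_cases hn1 : n = 1
  · subst hn1
    rw [show ((2*1+2:ℕ) : ZMod (2*(1+1))) = ((0:ℕ) : ZMod (2*(1+1))) from
      cast_eq_cast (le_refl 1) (by omega)]
    rw [eq_cast_iff_val (le_refl 1) _ (by omega)]
    have hv := val_lt' (le_refl 1) m
    omega
  · rw [eq_cast_iff_val hn _ (by omega)]; omega

lemma val_2n2 (hn : 1 ≤ n) :
    ((2*n+2:ℕ) : ZMod (2*(n+n))).val = 2*n+2 ∨
      (n = 1 ∧ ((2*n+2:ℕ) : ZMod (2*(n+n))).val = 0) := by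
  by_cases hn1 : n = 1
  · right
    refine ⟨hn1, ?_⟩
    subst hn1
    rw [show ((2*1+2:ℕ) : ZMod (2*(1+1))) = ((0:ℕ) : ZMod (2*(1+1))) from
      cast_eq_cast (le_refl 1) (by omega)]
    exact val_cast_lt (le_refl 1) (by omega)
  · left; exact val_cast_lt hn (by omega)

lemma add_cast_inj (hn : 1 ≤ n) (m : ZMod (2*(n+n))) {a b : ℕ} (ha : a < 2*(n+n))
    (hb : b < 2*(n+n)) (h : m + (a : ZMod (2*(n+n))) = m + (b : ZMod (2*(n+n)))) : a = b :=
  (cast_inj hn ha hb).1 (add_left_cancel h)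

/-! bdp branch lemmas -/

lemma bdp_false (m : ZMod (2*(n+n))) :
    bdp n (false, m) = (false, if m.val % 2 = 0 then m + ((1:ℕ) : ZMod (2*(n+n)))
      else m + ((2*(n+n) - 1 : ℕ) : ZMod (2*(n+n)))) := by
  simp [bdp]

lemma bdp_false_even {m : ZMod (2*(n+n))} (hp : m.val % 2 = 0) :
    bdp n (false, m) = (false, m + ((1:ℕ) : ZMod (2*(n+n)))) := by
  rw [bdp_false, if_pos hp]

lemma bdp_false_odd {m : ZMod (2*(n+n))} (hp : m.val % 2 ≠ 0) :
    bdp n (false, m) = (false, m + ((2*(n+n)-1:ℕ) : ZMod (2*(n+n)))) := by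
  rw [bdp_false, if_neg hp]

lemma bdp_true (m : ZMod (2*(n+n))) :
    bdp n (true, m) = (true,
     if m.val % 2 = 0 then
       (if m = ((2:ℕ) : ZMod (2*(n+n))) then ((2*n+2 : ℕ) : ZMod (2*(n+n)))
        else if m = ((2*n+2:ℕ) : ZMod (2*(n+n))) then ((2:ℕ) : ZMod (2*(n+n)))
        else m + ((2*(n+n) - 3 : ℕ) : ZMod (2*(n+n))))
     else
       (if m = ((2*n-1:ℕ) : ZMod (2*(n+n))) then ((2*(n+n)-1 : ℕ) : ZMod (2*(n+n)))
        else if m = ((2*(n+n)-1:ℕ) : ZMod (2*(n+n))) then ((2*n-1:ℕ) : ZMod (2*(n+n)))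
        else m + ((3:ℕ) : ZMod (2*(n+n))))) := by
  simp [bdp]

lemma bdp_odd_b1 (hn : 1 ≤ n) {m : ZMod (2*(n+n))} (hp : m.val % 2 ≠ 0)
    (h1 : m.val = 2*n-1) :
    bdp n (true, m) = (true, ((2*(n+n)-1:ℕ) : ZMod (2*(n+n)))) := by
  rw [bdp_true, if_neg hp, if_pos ((eq_cast_iff_val hn m (by omega)).2 h1)]

lemma bdp_odd_b2 (hn : 1 ≤ n) {m : ZMod (2*(n+n))} (hp : m.val % 2 ≠ 0)
    (h1 : m.val ≠ 2*n-1) (h2 : m.val = 2*(n+n)-1) :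
    bdp n (true, m) = (true, ((2*n-1:ℕ) : ZMod (2*(n+n)))) := by
  rw [bdp_true, if_neg hp,
    if_neg (fun hh => h1 ((eq_cast_iff_val hn m (by omega)).1 hh)),
    if_pos ((eq_cast_iff_val hn m (by omega)).2 h2)]

lemma bdp_odd_gen (hn : 1 ≤ n) {m : ZMod (2*(n+n))} (hp : m.val % 2 ≠ 0)
    (h1 : m.val ≠ 2*n-1) (h2 : m.val ≠ 2*(n+n)-1) :
    bdp n (true, m) = (true, m + ((3:ℕ) : ZMod (2*(n+n)))) := by
  rw [bdp_true, if_neg hp,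
    if_neg (fun hh => h1 ((eq_cast_iff_val hn m (by omega)).1 hh)),
    if_neg (fun hh => h2 ((eq_cast_iff_val hn m (by omega)).1 hh))]

lemma bdp_even_c1 (hn : 1 ≤ n) {m : ZMod (2*(n+n))} (hp : m.val % 2 = 0)
    (h1 : m.val = 2) :
    bdp n (true, m) = (true, ((2*n+2:ℕ) : ZMod (2*(n+n)))) := by
  rw [bdp_true, if_pos hp, if_pos ((eq_cast_iff_val hn m (by omega)).2 h1)]

lemma bdp_even_c2 (hn : 1 ≤ n) {m : ZMod (2*(n+n))} (hp : m.val % 2 = 0)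
    (h1 : m.val ≠ 2) (h2 : m = ((2*n+2:ℕ) : ZMod (2*(n+n)))) :
    bdp n (true, m) = (true, ((2:ℕ) : ZMod (2*(n+n)))) := by
  rw [bdp_true, if_pos hp,
    if_neg (fun hh => h1 ((eq_cast_iff_val hn m (by omega)).1 hh)), if_pos h2]

lemma bdp_even_gen (hn : 1 ≤ n) {m : ZMod (2*(n+n))} (hp : m.val % 2 = 0)
    (h1 : m.val ≠ 2) (h2 : m ≠ ((2*n+2:ℕ) : ZMod (2*(n+n)))) :
    bdp n (true, m) = (true, m + ((2*(n+n)-3:ℕ) : ZMod (2*(n+n)))) := by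
  rw [bdp_true, if_pos hp,
    if_neg (fun hh => h1 ((eq_cast_iff_val hn m (by omega)).1 hh)), if_neg h2]

end PapAux
end PartC
section PartD
namespace PapAux
variable {n : ℕ}

lemma bdp_invol (hn : 1 ≤ n) (x : PapVert (2*(n+n))) : bdp n (bdp n x) = x := by
  obtain ⟨b, m⟩ := x
  have he := val_lt' hn m
  cases b
  case false =>
    by_cases hp : m.val % 2 = 0
    · rw [bdp_false_even hp,
        bdp_false_odd (by rw [parity_add hn]; omega),
        add_add_cancel hn m _ _ (by omega)]
    · rw [bdp_false_odd hp,
        bdp_false_even (by rw [parity_add hn]; omega),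
        add_add_cancel hn m _ _ (by omega)]
  case true =>
    by_cases hp : m.val % 2 = 0
    · by_cases h1 : m.val = 2
      · rw [bdp_even_c1 hn hp h1]
        rcases val_2n2 hn with hv | ⟨hn1, hv⟩
        · rw [bdp_even_c2 hn (by omega) (by omega) rfl,
            Prod.mk.injEq]
          exact ⟨rfl, ((eq_cast_iff_val hn m (by omega)).2 h1).symm⟩
        · rw [bdp_even_c2 hn (by omega) (by omega) rfl,
            Prod.mk.injEq]
          exact ⟨rfl, ((eq_cast_iff_val hn m (by omega)).2 h1).symm⟩
      · by_cases h2 : m = ((2*n+2:ℕ) : ZMod (2*(n+n)))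
        · rw [bdp_even_c2 hn hp h1 h2,
            bdp_even_c1 hn (by rw [val_cast_lt hn (by omega)]) (val_cast_lt hn (by omega)),
            Prod.mk.injEq]
          exact ⟨rfl, h2.symm⟩
        · -- generic even
          have hne : ¬ (m.val = 2*n+2 ∨ (n = 1 ∧ m.val = 0)) := by
            rw [← eq_cast2n2_iff hn]; exact h2
          rw [bdp_even_gen hn hp h1 h2]
          have hv : (m + ((2*(n+n)-3:ℕ) : ZMod (2*(n+n)))).val = (m.val + (2*(n+n)-3)) % (2*(n+n)) :=
            val_add hn m _
          rcases Nat.lt_or_ge m.val 4 with h4 | h4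
          · -- m.val = 0, n ≥ 2
            have h0 : m.val = 0 := by omega
            have hn2 : 2 ≤ n := by omega
            have hv0 : (m + ((2*(n+n)-3:ℕ) : ZMod (2*(n+n)))).val = 2*(n+n)-3 := by
              rw [hv, h0, Nat.zero_add, Nat.mod_eq_of_lt (by omega)]
            rw [bdp_odd_gen hn (by omega) (by omega) (by omega),
              add_add_cancel hn m _ _ (by omega)]
          · have hv0 : (m + ((2*(n+n)-3:ℕ) : ZMod (2*(n+n)))).val = m.val - 3 := by
              rw [hv, show m.val + (2*(n+n)-3) = (m.val - 3) + 2*(n+n) by omega,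
                Nat.add_mod_right, Nat.mod_eq_of_lt (by omega)]
            rw [bdp_odd_gen hn (by omega) (by omega) (by omega)]
            rw [show m + ((2*(n+n)-3:ℕ) : ZMod (2*(n+n))) + ((3:ℕ) : ZMod (2*(n+n)))
              = m + (((2*(n+n)-3:ℕ) : ZMod (2*(n+n))) + ((3:ℕ) : ZMod (2*(n+n)))) from add_assoc _ _ _,
              cast_add_cast, show 2*(n+n)-3+3 = 2*(n+n) by omega, ZMod.natCast_self, add_zero]
    · by_cases h1 : m.val = 2*n-1
      · rw [bdp_odd_b1 hn hp h1,
          bdp_odd_b2 hn (by rw [val_cast_lt hn (by omega)]; omega)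
            (by rw [val_cast_lt hn (by omega)]; omega) (val_cast_lt hn (by omega)),
          Prod.mk.injEq]
        exact ⟨rfl, ((eq_cast_iff_val hn m (by omega)).2 h1).symm⟩
      · by_cases h2 : m.val = 2*(n+n)-1
        · rw [bdp_odd_b2 hn hp h1 h2,
            bdp_odd_b1 hn (by rw [val_cast_lt hn (by omega)]; omega) (val_cast_lt hn (by omega)),
            Prod.mk.injEq]
          exact ⟨rfl, ((eq_cast_iff_val hn m (by omega)).2 h2).symm⟩
        · rw [bdp_odd_gen hn hp h1 h2]
          have hv : (m + ((3:ℕ) : ZMod (2*(n+n)))).val = (m.val + 3) % (2*(n+n)) :=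
            val_add hn m _
          rcases Nat.lt_or_ge (m.val + 3) (2*(n+n)) with h4 | h4
          · have hv0 : (m + ((3:ℕ) : ZMod (2*(n+n)))).val = m.val + 3 := by
              rw [hv, Nat.mod_eq_of_lt h4]
            rw [bdp_even_gen hn (by omega) (by omega)
                (fun hh => by rw [eq_cast2n2_iff hn] at hh; omega),
              add_add_cancel hn m _ _ (by omega)]
          · -- m.val = 2*(n+n)-3, wraps to 0; n ≥ 2 since m.val ≠ 2n-1
            have h0 : m.val = 2*(n+n)-3 := by omega
            have hn2 : 2 ≤ n := by omega
            have hv0 : (m + ((3:ℕ) : ZMod (2*(n+n)))).val = 0 := by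
              rw [hv, show m.val + 3 = 2*(n+n) by omega, Nat.mod_self]
            rw [bdp_even_gen hn (by omega) (by omega)
                (fun hh => by rw [eq_cast2n2_iff hn] at hh; omega),
              add_add_cancel hn m _ _ (by omega)]

lemma bdp_ne (hn : 1 ≤ n) (x : PapVert (2*(n+n))) : bdp n x ≠ x := by
  obtain ⟨b, m⟩ := x
  have he := val_lt' hn m
  intro h
  cases b
  case false =>
    by_cases hp : m.val % 2 = 0
    · rw [bdp_false_even hp, Prod.mk.injEq] at h
      exact add_cast_ne hn m (a := 1) (by omega) (by omega) h.2
    · rw [bdp_false_odd hp, Prod.mk.injEq] at h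
      exact add_cast_ne hn m (a := 2*(n+n)-1) (by omega) (by omega) h.2
  case true =>
    by_cases hp : m.val % 2 = 0
    · by_cases h1 : m.val = 2
      · rw [bdp_even_c1 hn hp h1, Prod.mk.injEq] at h
        have := congrArg ZMod.val h.2
        rcases val_2n2 hn with hv | ⟨hn1, hv⟩ <;> omega
      · by_cases h2 : m = ((2*n+2:ℕ) : ZMod (2*(n+n)))
        · rw [bdp_even_c2 hn hp h1 h2, Prod.mk.injEq] at h
          have := congrArg ZMod.val h.2
          rw [val_cast_lt hn (by omega)] at this
          omega
        · rw [bdp_even_gen hn hp h1 h2, Prod.mk.injEq] at h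
          exact add_cast_ne hn m (a := 2*(n+n)-3) (by omega) (by omega) h.2
    · by_cases h1 : m.val = 2*n-1
      · rw [bdp_odd_b1 hn hp h1, Prod.mk.injEq] at h
        have := congrArg ZMod.val h.2
        rw [val_cast_lt hn (by omega)] at this
        omega
      · by_cases h2 : m.val = 2*(n+n)-1
        · rw [bdp_odd_b2 hn hp h1 h2, Prod.mk.injEq] at h
          have := congrArg ZMod.val h.2
          rw [val_cast_lt hn (by omega)] at this
          omega
        · rw [bdp_odd_gen hn hp h1 h2, Prod.mk.injEq] at h
          exact add_cast_ne hn m (a := 3) (by omega) (by omega) h.2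

lemma intp_ne_bdp (hn : 1 ≤ n) (x : PapVert (2*(n+n))) : intp x ≠ bdp n x := by
  obtain ⟨b, m⟩ := x
  have he := val_lt' hn m
  intro h
  cases b
  case false =>
    by_cases hp : m.val % 2 = 0
    · rw [bdp_false_even hp] at h
      simp only [intp, if_pos hp, Prod.mk.injEq] at h
      have := add_cast_inj hn m (by omega) (by omega) h.2
      omega
    · rw [bdp_false_odd hp] at h
      simp only [intp, if_neg hp, Prod.mk.injEq] at h
      have := add_cast_inj hn m (by omega) (by omega) h.2
      omega
  case true =>
    by_cases hp : m.val % 2 = 0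
    · simp only [intp, if_pos hp] at h
      have hpar : (m + ((2*(n+n)-1:ℕ) : ZMod (2*(n+n)))).val % 2 = 1 := by
        rw [parity_add hn]; omega
      by_cases h1 : m.val = 2
      · rw [bdp_even_c1 hn hp h1, Prod.mk.injEq] at h
        have := congrArg (fun z => ZMod.val z % 2) h.2
        rcases val_2n2 hn with hv | ⟨hn1, hv⟩ <;> omega
      · by_cases h2 : m = ((2*n+2:ℕ) : ZMod (2*(n+n)))
        · rw [bdp_even_c2 hn hp h1 h2, Prod.mk.injEq] at h
          have := congrArg (fun z => ZMod.val z % 2) h.2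
          rw [val_cast_lt hn (by omega)] at this
          omega
        · rw [bdp_even_gen hn hp h1 h2, Prod.mk.injEq] at h
          have := add_cast_inj hn m (by omega) (by omega) h.2
          omega
    · simp only [intp, if_neg hp] at h
      have hpar : (m + ((1:ℕ) : ZMod (2*(n+n)))).val % 2 = 0 := by
        rw [parity_add hn]; omega
      by_cases h1 : m.val = 2*n-1
      · rw [bdp_odd_b1 hn hp h1, Prod.mk.injEq] at h
        have := congrArg (fun z => ZMod.val z % 2) h.2
        rw [val_cast_lt hn (by omega)] at this
        omega
      · by_cases h2 : m.val = 2*(n+n)-1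
        · rw [bdp_odd_b2 hn hp h1 h2, Prod.mk.injEq] at h
          have := congrArg (fun z => ZMod.val z % 2) h.2
          rw [val_cast_lt hn (by omega)] at this
          omega
        · rw [bdp_odd_gen hn hp h1 h2, Prod.mk.injEq] at h
          have := add_cast_inj hn m (by omega) (by omega) h.2
          omega

end PapAux
end PartD
section PartE
namespace PapAux
variable {n : ℕ}

lemma add_cast_eq (hn : 1 ≤ n) (m : ZMod (2*(n+n))) (k : ℕ) :
    m + (k : ZMod (2*(n+n))) = ((m.val + k : ℕ) : ZMod (2*(n+n))) := by
  rw [← cast_add_cast, self_cast hn m]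

lemma pu_val (hn : 1 ≤ n) (m : ZMod (2*(n+n))) :
    ((false, m) : PapVert (2*(n+n))) = pu (2*(n+n)) m.val := by
  rw [pu, self_cast hn m]

lemma pv_val (hn : 1 ≤ n) (m : ZMod (2*(n+n))) :
    ((true, m) : PapVert (2*(n+n))) = pv (2*(n+n)) m.val := by
  rw [pv, self_cast hn m]

lemma pu_add (hn : 1 ≤ n) (m : ZMod (2*(n+n))) (k : ℕ) :
    ((false, m + (k : ZMod (2*(n+n)))) : PapVert (2*(n+n))) = pu (2*(n+n)) (m.val + k) := by
  rw [pu, add_cast_eq hn m k]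

lemma pv_add (hn : 1 ≤ n) (m : ZMod (2*(n+n))) (k : ℕ) :
    ((true, m + (k : ZMod (2*(n+n)))) : PapVert (2*(n+n))) = pv (2*(n+n)) (m.val + k) := by
  rw [pv, add_cast_eq hn m k]

lemma pu_congr (hn : 1 ≤ n) {a b : ℕ} (h : a = b ∨ a = b + 2*(n+n) ∨ a + 2*(n+n) = b) :
    pu (2*(n+n)) a = pu (2*(n+n)) b := by
  rw [pu, pu, cast_eq_cast hn h]

lemma pv_congr (hn : 1 ≤ n) {a b : ℕ} (h : a = b ∨ a = b + 2*(n+n) ∨ a + 2*(n+n) = b) :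
    pv (2*(n+n)) a = pv (2*(n+n)) b := by
  rw [pv, pv, cast_eq_cast hn h]

lemma spk_mem (hn : 1 ≤ n) (x : PapVert (2*(n+n))) : s(x, spk x) ∈ papillonEdges n n := by
  obtain ⟨b, m⟩ := x
  have he := val_lt' hn m
  have key : ∃ i, 1 ≤ i ∧ i ≤ 2*(n+n) ∧
      s(((false, m) : PapVert (2*(n+n))), ((true, m) : PapVert (2*(n+n))))
        = s(pu (2*(n+n)) i, pv (2*(n+n)) i) := by
    by_cases h0 : m.val = 0
    · refine ⟨2*(n+n), by omega, le_refl _, ?_⟩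
      rw [pu_val hn m, pv_val hn m, h0,
        pu_congr hn (a := 0) (b := 2*(n+n)) (by omega),
        pv_congr hn (a := 0) (b := 2*(n+n)) (by omega)]
    · exact ⟨m.val, by omega, by omega, by rw [pu_val hn m, pv_val hn m]⟩
  obtain ⟨i, hi1, hi2, hi3⟩ := key
  simp only [papillonEdges, Set.mem_setOf_eq]
  cases b
  · exact Or.inr (Or.inr (Or.inl ⟨i, hi1, hi2, hi3⟩))
  · refine Or.inr (Or.inr (Or.inl ⟨i, hi1, hi2, ?_⟩))
    have : spk ((true, m) : PapVert (2*(n+n))) = ((false, m) : PapVert (2*(n+n))) := rfl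
    rw [this, Sym2.eq_swap, hi3]

lemma intp_mem (hn : 1 ≤ n) (x : PapVert (2*(n+n))) : s(x, intp x) ∈ papillonEdges n n := by
  obtain ⟨b, m⟩ := x
  have he := val_lt' hn m
  simp only [papillonEdges, Set.mem_setOf_eq]
  by_cases hp : m.val % 2 = 0
  · -- partner is m + (2*(n+n)-1), i.e. index m.val - 1 (or wrap)
    have hin : intp ((b, m) : PapVert (2*(n+n))) = (b, m + ((2*(n+n)-1:ℕ) : ZMod (2*(n+n)))) := by
      simp [intp, hp]
    rw [hin]
    cases b
    · -- outer: cycle edge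
      by_cases h0 : m.val = 0
      · refine Or.inl ⟨2*(n+n)-1, by omega, le_refl _, ?_⟩
        rw [Sym2.eq_swap, pu_add hn m _, pu_val hn m, h0,
          pu_congr hn (a := 0 + (2*(n+n)-1)) (b := 2*(n+n)-1) (by omega),
          pu_congr hn (a := 0) (b := 2*(n+n)-1+1) (by omega)]
      · refine Or.inl ⟨m.val - 1, by omega, by omega, ?_⟩
        rw [Sym2.eq_swap, pu_add hn m _, pu_val hn m,
          pu_congr hn (a := m.val + (2*(n+n)-1)) (b := m.val - 1) (by omega),
          pu_congr hn (a := m.val) (b := m.val - 1 + 1) (by omega)]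
    · -- inner pairing edge
      by_cases h0 : m.val = 0
      · refine Or.inr (Or.inr (Or.inr (Or.inl ⟨n+n, by omega, le_refl _, ?_⟩)))
        rw [Sym2.eq_swap, pv_add hn m _, pv_val hn m, h0,
          pv_congr hn (a := 0 + (2*(n+n)-1)) (b := 2*(n+n)-1) (by omega),
          pv_congr hn (a := 0) (b := 2*(n+n)) (by omega)]
      · refine Or.inr (Or.inr (Or.inr (Or.inl ⟨m.val / 2, by omega, by omega, ?_⟩)))
        rw [Sym2.eq_swap, pv_add hn m _, pv_val hn m,
          pv_congr hn (a := m.val + (2*(n+n)-1)) (b := 2*(m.val/2) - 1) (by omega),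
          pv_congr hn (a := m.val) (b := 2*(m.val/2)) (by omega)]
  · have hin : intp ((b, m) : PapVert (2*(n+n))) = (b, m + ((1:ℕ) : ZMod (2*(n+n)))) := by
      simp [intp, hp]
    rw [hin]
    cases b
    · refine Or.inl ⟨m.val, by omega, by omega, ?_⟩
      rw [pu_add hn m _, pu_val hn m]
    · refine Or.inr (Or.inr (Or.inr (Or.inl ⟨(m.val + 1)/2, by omega, by omega, ?_⟩)))
      rw [pv_add hn m _, pv_val hn m,
        pv_congr hn (a := m.val) (b := 2*((m.val+1)/2) - 1) (by omega),
        pv_congr hn (a := m.val + 1) (b := 2*((m.val+1)/2)) (by omega)]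

lemma bdp_mem (hn : 1 ≤ n) (x : PapVert (2*(n+n))) : s(x, bdp n x) ∈ papillonEdges n n := by
  obtain ⟨b, m⟩ := x
  have he := val_lt' hn m
  simp only [papillonEdges, Set.mem_setOf_eq]
  cases b
  · by_cases hp : m.val % 2 = 0
    · rw [bdp_false_even hp]
      by_cases h0 : m.val = 0
      · refine Or.inr (Or.inl ?_)
        rw [pu_add hn m _, pu_val hn m, h0,
          pu_congr hn (a := 0) (b := 2*(n+n)) (by omega),
          pu_congr hn (a := 0 + 1) (b := 1) (by omega)]
      · refine Or.inl ⟨m.val, by omega, by omega, ?_⟩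
        rw [pu_add hn m _, pu_val hn m]
    · rw [bdp_false_odd hp]
      by_cases h0 : m.val = 1
      · refine Or.inr (Or.inl ?_)
        rw [Sym2.eq_swap, pu_add hn m _, pu_val hn m, h0,
          pu_congr hn (a := 1 + (2*(n+n)-1)) (b := 2*(n+n)) (by omega)]
      · refine Or.inl ⟨m.val - 1, by omega, by omega, ?_⟩
        rw [Sym2.eq_swap, pu_add hn m _, pu_val hn m,
          pu_congr hn (a := m.val + (2*(n+n)-1)) (b := m.val - 1) (by omega),
          pu_congr hn (a := m.val) (b := m.val - 1 + 1) (by omega)]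
  · by_cases hp : m.val % 2 = 0
    · by_cases h1 : m.val = 2
      · rw [bdp_even_c1 hn hp h1]
        refine Or.inr (Or.inr (Or.inr (Or.inr (Or.inr (Or.inl ?_)))))
        rw [pv_val hn m, h1, Nat.min_self]
        rfl
      · by_cases h2 : m = ((2*n+2:ℕ) : ZMod (2*(n+n)))
        · rw [bdp_even_c2 hn hp h1 h2]
          refine Or.inr (Or.inr (Or.inr (Or.inr (Or.inr (Or.inl ?_)))))
          rw [Sym2.eq_swap, Nat.min_self]
          simp only [pv]
          rw [h2]
        · have hne : ¬ (m.val = 2*n+2 ∨ (n = 1 ∧ m.val = 0)) := by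
            rw [← eq_cast2n2_iff hn]; exact h2
          rw [bdp_even_gen hn hp h1 h2]
          by_cases h0 : m.val = 0
          · have hn2 : 2 ≤ n := by omega
            refine Or.inr (Or.inr (Or.inr (Or.inr (Or.inl
              ⟨(n+n)-1, by omega, by omega, by rw [Nat.min_self]; omega, ?_⟩))))
            rw [Sym2.eq_swap, pv_add hn m _, pv_val hn m, h0,
              pv_congr hn (a := 0 + (2*(n+n)-3)) (b := 2*((n+n)-1) - 1) (by omega),
              pv_congr hn (a := 0) (b := 2*((n+n)-1) + 2) (by omega)]
          · refine Or.inr (Or.inr (Or.inr (Or.inr (Or.inl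
              ⟨(m.val-2)/2, by omega, by omega, by rw [Nat.min_self]; omega, ?_⟩))))
            rw [Sym2.eq_swap, pv_add hn m _, pv_val hn m,
              pv_congr hn (a := m.val + (2*(n+n)-3)) (b := 2*((m.val-2)/2) - 1) (by omega),
              pv_congr hn (a := m.val) (b := 2*((m.val-2)/2) + 2) (by omega)]
    · by_cases h1 : m.val = 2*n-1
      · rw [bdp_odd_b1 hn hp h1]
        refine Or.inr (Or.inr (Or.inr (Or.inr (Or.inr (Or.inr ?_)))))
        rw [pv_val hn m, h1, Nat.min_self]
        rfl
      · by_cases h2 : m.val = 2*(n+n)-1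
        · rw [bdp_odd_b2 hn hp h1 h2]
          refine Or.inr (Or.inr (Or.inr (Or.inr (Or.inr (Or.inr ?_)))))
          rw [Sym2.eq_swap, pv_val hn m, h2, Nat.min_self]
          rfl
        · rw [bdp_odd_gen hn hp h1 h2]
          refine Or.inr (Or.inr (Or.inr (Or.inr (Or.inl
            ⟨(m.val+1)/2, by omega, by omega, by rw [Nat.min_self]; omega, ?_⟩))))
          rw [pv_add hn m _, pv_val hn m,
            pv_congr hn (a := m.val) (b := 2*((m.val+1)/2) - 1) (by omega),
            pv_congr hn (a := m.val + 3) (b := 2*((m.val+1)/2) + 2) (by omega)]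

end PapAux
end PartE
section PartF
namespace PapAux
variable {n : ℕ}

lemma mem_E_iff (e : Sym2 (PapVert (2*(n+n)))) :
    e ∈ (papillon n n).edgeSet ↔ e ∈ papillonEdges n n ∧ ¬ e.IsDiag := by
  rw [papillon, edgeSet_fromEdgeSet]
  exact Iff.rfl

lemma spk_memE (hn : 1 ≤ n) (x : PapVert (2*(n+n))) : s(x, spk x) ∈ (papillon n n).edgeSet := by
  rw [mem_E_iff]
  exact ⟨spk_mem hn x, fun h => spk_ne x (Sym2.mk_isDiag_iff.1 h).symm⟩

lemma intp_memE (hn : 1 ≤ n) (x : PapVert (2*(n+n))) : s(x, intp x) ∈ (papillon n n).edgeSet := by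
  rw [mem_E_iff]
  exact ⟨intp_mem hn x, fun h => intp_ne hn x (Sym2.mk_isDiag_iff.1 h).symm⟩

lemma bdp_memE (hn : 1 ≤ n) (x : PapVert (2*(n+n))) : s(x, bdp n x) ∈ (papillon n n).edgeSet := by
  rw [mem_E_iff]
  exact ⟨bdp_mem hn x, fun h => bdp_ne hn x (Sym2.mk_isDiag_iff.1 h).symm⟩

lemma intp_pu_odd (hn : 1 ≤ n) {i : ℕ} (hi : i < 2*(n+n)) (hp : i % 2 = 1) :
    intp (pu (2*(n+n)) i) = pu (2*(n+n)) (i+1) := by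
  simp only [pu, intp, val_cast_lt hn hi]
  rw [if_neg (by omega), cast_add_cast]

lemma intp_pv_odd (hn : 1 ≤ n) {i : ℕ} (hi : i < 2*(n+n)) (hp : i % 2 = 1) :
    intp (pv (2*(n+n)) i) = pv (2*(n+n)) (i+1) := by
  simp only [pv, intp, val_cast_lt hn hi]
  rw [if_neg (by omega), cast_add_cast]

lemma bdp_pu_even (hn : 1 ≤ n) {i : ℕ} (hi : i < 2*(n+n)) (hp : i % 2 = 0) :
    bdp n (pu (2*(n+n)) i) = pu (2*(n+n)) (i+1) := by
  rw [pu, bdp_false_even (by rw [val_cast_lt hn hi]; omega), cast_add_cast, pu]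

lemma bdp_pv_odd_gen (hn : 1 ≤ n) {i : ℕ} (hi : i < 2*(n+n)) (hp : i % 2 = 1)
    (h1 : i ≠ 2*n-1) (h2 : i ≠ 2*(n+n)-1) :
    bdp n (pv (2*(n+n)) i) = pv (2*(n+n)) (i+3) := by
  rw [pv, bdp_odd_gen hn (by rw [val_cast_lt hn hi]; omega)
    (by rw [val_cast_lt hn hi]; exact h1) (by rw [val_cast_lt hn hi]; exact h2),
    cast_add_cast, pv]

lemma gen (hn : 1 ≤ n) {e : Sym2 (PapVert (2*(n+n)))} (he : e ∈ papillonEdges n n) :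
    ∃ x, e = s(x, spk x) ∨ e = s(x, intp x) ∨ e = s(x, bdp n x) := by
  simp only [papillonEdges, Set.mem_setOf_eq, Nat.min_self] at he
  obtain ⟨i, h1, h2, rfl⟩ | rfl | ⟨i, h1, h2, rfl⟩ | ⟨i, h1, h2, rfl⟩
    | ⟨i, h1, h2, h3, rfl⟩ | rfl | rfl := he
  · -- outer cycle edges
    refine ⟨pu (2*(n+n)) i, ?_⟩
    by_cases hp : i % 2 = 0
    · exact Or.inr (Or.inr (by rw [bdp_pu_even hn (by omega) (by omega)]))
    · exact Or.inr (Or.inl (by rw [intp_pu_odd hn (by omega) (by omega)]))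
  · -- closing outer edge
    refine ⟨pu (2*(n+n)) (2*(n+n)), Or.inr (Or.inr ?_)⟩
    rw [show pu (2*(n+n)) (2*(n+n)) = pu (2*(n+n)) 0 from pu_congr hn (by omega),
      bdp_pu_even hn (by omega) (by omega)]
  · -- spokes
    exact ⟨pu (2*(n+n)) i, Or.inl rfl⟩
  · -- inner pairing
    refine ⟨pv (2*(n+n)) (2*i-1), Or.inr (Or.inl ?_)⟩
    rw [intp_pv_odd hn (by omega) (by omega), pv_congr hn (a := 2*i-1+1) (b := 2*i) (by omega)]
  · -- inner cross
    refine ⟨pv (2*(n+n)) (2*i-1), Or.inr (Or.inr ?_)⟩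
    rw [bdp_pv_odd_gen hn (by omega) (by omega) (by omega) (by omega),
      pv_congr hn (a := 2*i-1+3) (b := 2*i+2) (by omega)]
  · -- edge c
    refine ⟨pv (2*(n+n)) 2, Or.inr (Or.inr ?_)⟩
    rw [pv, bdp_even_c1 hn (by rw [val_cast_lt hn (by omega)])
      (val_cast_lt hn (by omega))]
    rfl
  · -- edge b
    refine ⟨pv (2*(n+n)) (2*n-1), Or.inr (Or.inr ?_)⟩
    rw [pv, bdp_odd_b1 hn (by rw [val_cast_lt hn (by omega)]; omega)
      (val_cast_lt hn (by omega))]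
    rfl

lemma incident (hn : 1 ≤ n) {e : Sym2 (PapVert (2*(n+n)))} (he : e ∈ (papillon n n).edgeSet)
    {w : PapVert (2*(n+n))} (hw : w ∈ e) :
    e = s(w, spk w) ∨ e = s(w, intp w) ∨ e = s(w, bdp n w) := by
  obtain ⟨x, hx | hx | hx⟩ := gen hn ((mem_E_iff e).1 he).1
  · exact Or.inl (resolve spk_invol hx hw)
  · exact Or.inr (Or.inl (resolve (intp_invol hn) hx hw))
  · exact Or.inr (Or.inr (resolve (bdp_invol hn) hx hw))

end PapAux
end PartF
section PartG
namespace PapAux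
variable {n : ℕ}

lemma pu_ne_pv (a b : ℕ) : pu (2*(n+n)) a ≠ pv (2*(n+n)) b := by
  simp [pu, pv]

lemma pu_ne_par (hn : 1 ≤ n) {a b : ℕ} (h : ¬ a % 2 = b % 2) :
    pu (2*(n+n)) a ≠ pu (2*(n+n)) b := by
  intro hh
  apply h
  have := congrArg (fun z : PapVert (2*(n+n)) => (z.2).val % 2) hh
  simpa [pu, val_parity hn] using this

lemma pv_ne_par (hn : 1 ≤ n) {a b : ℕ} (h : ¬ a % 2 = b % 2) :
    pv (2*(n+n)) a ≠ pv (2*(n+n)) b := by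
  intro hh
  apply h
  have := congrArg (fun z : PapVert (2*(n+n)) => (z.2).val % 2) hh
  simpa [pv, val_parity hn] using this

lemma pu_ne_val (hn : 1 ≤ n) {a b : ℕ} (ha : a < 2*(n+n)) (hb : b < 2*(n+n)) (h : a ≠ b) :
    pu (2*(n+n)) a ≠ pu (2*(n+n)) b := by
  intro hh
  exact h ((cast_inj hn ha hb).1 (congrArg Prod.snd hh))

lemma X_bdp (hn : 1 ≤ n) {e : Sym2 (PapVert (2*(n+n)))} (he : e ∈ Xcut n) :
    ∃ x, e = s(x, bdp n x) := by
  simp only [Xcut, Set.mem_insert_iff, Set.mem_singleton_iff] at he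
  obtain rfl | rfl | rfl | rfl := he
  · refine ⟨pu (2*(n+n)) 1, ?_⟩
    rw [pu, bdp_false_odd (by rw [val_cast_lt hn (by omega)]; omega), cast_add_cast,
      show ((1 + (2*(n+n)-1) : ℕ) : ZMod (2*(n+n))) = ((4*n : ℕ) : ZMod (2*(n+n))) from
        cast_eq_cast hn (by omega)]
    rfl
  · refine ⟨pv (2*(n+n)) (2*n-1), ?_⟩
    rw [pv, bdp_odd_b1 hn (by rw [val_cast_lt hn (by omega)]; omega)
      (val_cast_lt hn (by omega)),
      show ((2*(n+n)-1 : ℕ) : ZMod (2*(n+n))) = ((4*n-1 : ℕ) : ZMod (2*(n+n))) from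
        cast_eq_cast hn (by omega)]
    rfl
  · refine ⟨pv (2*(n+n)) 2, ?_⟩
    rw [pv, bdp_even_c1 hn (by rw [val_cast_lt hn (by omega)]) (val_cast_lt hn (by omega))]
    rfl
  · refine ⟨pu (2*(n+n)) (2*n), ?_⟩
    rw [bdp_pu_even hn (by omega) (by omega)]

lemma X_subE (hn : 1 ≤ n) : Xcut n ⊆ (papillon n n).edgeSet := by
  intro e he
  obtain ⟨x, rfl⟩ := X_bdp hn he
  exact bdp_memE hn x

lemma X_ncard (hn : 1 ≤ n) : (Xcut n).ncard = 4 := by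
  have hAB : s(pu (2*(n+n)) 1, pu (2*(n+n)) (4*n))
      ≠ s(pv (2*(n+n)) (2*n-1), pv (2*(n+n)) (4*n-1)) := by
    intro h
    rcases Sym2.eq_iff.1 h with ⟨h1, -⟩ | ⟨h1, -⟩ <;> exact pu_ne_pv _ _ h1
  have hAC : s(pu (2*(n+n)) 1, pu (2*(n+n)) (4*n))
      ≠ s(pv (2*(n+n)) 2, pv (2*(n+n)) (2*n+2)) := by
    intro h
    rcases Sym2.eq_iff.1 h with ⟨h1, -⟩ | ⟨h1, -⟩ <;> exact pu_ne_pv _ _ h1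
  have hAD : s(pu (2*(n+n)) 1, pu (2*(n+n)) (4*n))
      ≠ s(pu (2*(n+n)) (2*n), pu (2*(n+n)) (2*n+1)) := by
    intro h
    rcases Sym2.eq_iff.1 h with ⟨h1, -⟩ | ⟨-, h2⟩
    · exact pu_ne_par hn (by omega) h1
    · -- pu (4n) = pu (2n) : reduce 4n to 0
      rw [pu_congr hn (a := 4*n) (b := 0) (by omega)] at h2
      exact pu_ne_val hn (by omega) (by omega) (by omega) h2
  have hBC : s(pv (2*(n+n)) (2*n-1), pv (2*(n+n)) (4*n-1))
      ≠ s(pv (2*(n+n)) 2, pv (2*(n+n)) (2*n+2)) := by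
    intro h
    rcases Sym2.eq_iff.1 h with ⟨h1, -⟩ | ⟨h1, -⟩ <;>
      exact pv_ne_par hn (by omega) h1
  have hBD : s(pv (2*(n+n)) (2*n-1), pv (2*(n+n)) (4*n-1))
      ≠ s(pu (2*(n+n)) (2*n), pu (2*(n+n)) (2*n+1)) := by
    intro h
    rcases Sym2.eq_iff.1 h with ⟨h1, -⟩ | ⟨h1, -⟩ <;> exact pu_ne_pv _ _ h1.symm
  have hCD : s(pv (2*(n+n)) 2, pv (2*(n+n)) (2*n+2))
      ≠ s(pu (2*(n+n)) (2*n), pu (2*(n+n)) (2*n+1)) := by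
    intro h
    rcases Sym2.eq_iff.1 h with ⟨h1, -⟩ | ⟨h1, -⟩ <;> exact pu_ne_pv _ _ h1.symm
  have m1 : s(pu (2*(n+n)) 1, pu (2*(n+n)) (4*n)) ∉
      ({s(pv (2*(n+n)) (2*n-1), pv (2*(n+n)) (4*n-1)),
        s(pv (2*(n+n)) 2, pv (2*(n+n)) (2*n+2)),
        s(pu (2*(n+n)) (2*n), pu (2*(n+n)) (2*n+1))} : Set (Sym2 (PapVert (2*(n+n))))) := by
    simp only [Set.mem_insert_iff, Set.mem_singleton_iff]
    push_neg
    exact ⟨hAB, hAC, hAD⟩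
  have m2 : s(pv (2*(n+n)) (2*n-1), pv (2*(n+n)) (4*n-1)) ∉
      ({s(pv (2*(n+n)) 2, pv (2*(n+n)) (2*n+2)),
        s(pu (2*(n+n)) (2*n), pu (2*(n+n)) (2*n+1))} : Set (Sym2 (PapVert (2*(n+n))))) := by
    simp only [Set.mem_insert_iff, Set.mem_singleton_iff]
    push_neg
    exact ⟨hBC, hBD⟩
  have m3 : s(pv (2*(n+n)) 2, pv (2*(n+n)) (2*n+2)) ∉
      ({s(pu (2*(n+n)) (2*n), pu (2*(n+n)) (2*n+1))} : Set (Sym2 (PapVert (2*(n+n))))) := by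
    simpa using hCD
  rw [Xcut,
    Set.ncard_insert_of_notMem m1
      ((((Set.finite_singleton _).insert _).insert _)),
    Set.ncard_insert_of_notMem m2 (((Set.finite_singleton _).insert _)),
    Set.ncard_insert_of_notMem m3 (Set.finite_singleton _),
    Set.ncard_singleton]

end PapAux
end PartG
open PapAux in
/-- If `M₁` is a perfect matching of the balanced papillon graph `P_n` with
`|M₁ ∩ X| = 2`, where `X` is the principal 4-edge-cut, then there is a perfect matching
`M₂` of `P_n` with `|M₂ ∩ X| = 2` and `M₁ ∩ M₂ = ∅`. -/
theorem statement12 (n : ℕ) (hn : 1 ≤ n) (M₁ : Set (Sym2 (PapVert (2 * (n + n)))))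
    (hM₁ : IsPerfMatching (papillon n n) M₁) (h2 : (M₁ ∩ Xcut n).ncard = 2) :
    ∃ M₂ : Set (Sym2 (PapVert (2 * (n + n)))),
      IsPerfMatching (papillon n n) M₂ ∧ (M₂ ∩ Xcut n).ncard = 2 ∧ M₁ ∩ M₂ = ∅ := by
  classical
  obtain ⟨hsub, huni⟩ := hM₁
  set M₂ : Set (Sym2 (PapVert (2 * (n + n)))) :=
    {e | ∃ x : PapVert (2 * (n + n)),
      (e = s(x, bdp n x) ∧ e ∉ M₁) ∨
      (e = s(x, intp x) ∧ s(x, intp x) ∉ M₁ ∧ s(x, spk x) ∉ M₁ ∧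
        s(intp x, spk (intp x)) ∉ M₁) ∨
      (e = s(x, spk x) ∧ s(intp x, spk (intp x)) ∈ M₁ ∧ s(x, spk x) ∉ M₁)} with hM₂def
  have hdisj : ∀ e ∈ M₂, e ∉ M₁ := by
    rintro e ⟨x, ⟨rfl, h⟩ | ⟨rfl, h, -, -⟩ | ⟨rfl, -, h⟩⟩ <;> exact h
  -- pairwise distinctness of the three edges at a vertex
  have edk : ∀ w : PapVert (2*(n+n)), s(w, spk w) ≠ s(w, bdp n w) := by
    intro w h
    rcases Sym2.eq_iff.1 h with ⟨-, h2'⟩ | ⟨h1, -⟩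
    · exact spk_ne_bdp w h2'
    · exact bdp_ne hn w h1.symm
  have edi : ∀ w : PapVert (2*(n+n)), s(w, intp w) ≠ s(w, bdp n w) := by
    intro w h
    rcases Sym2.eq_iff.1 h with ⟨-, h2'⟩ | ⟨h1, -⟩
    · exact intp_ne_bdp hn w h2'
    · exact bdp_ne hn w h1.symm
  have eds : ∀ w : PapVert (2*(n+n)), s(w, spk w) ≠ s(w, intp w) := by
    intro w h
    rcases Sym2.eq_iff.1 h with ⟨-, h2'⟩ | ⟨h1, -⟩
    · exact spk_ne_intp w h2'
    · exact intp_ne hn w h1.symm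
  have hPM : IsPerfMatching (papillon n n) M₂ := by
    constructor
    · rintro e ⟨x, ⟨rfl, -⟩ | ⟨rfl, -⟩ | ⟨rfl, -⟩⟩
      exacts [bdp_memE hn x, intp_memE hn x, spk_memE hn x]
    · intro w
      obtain ⟨e₁, ⟨he₁M, he₁w⟩, hu₁⟩ := huni w
      have hcl := incident hn (hsub he₁M) he₁w
      by_cases hb : s(w, bdp n w) ∈ M₁
      · have hkn : s(w, spk w) ∉ M₁ := by
          intro h
          have h1 := hu₁ _ ⟨h, Sym2.mem_mk_left _ _⟩
          have h2' := hu₁ _ ⟨hb, Sym2.mem_mk_left _ _⟩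
          exact edk w (h1.trans h2'.symm)
        have hin : s(w, intp w) ∉ M₁ := by
          intro h
          have h1 := hu₁ _ ⟨h, Sym2.mem_mk_left _ _⟩
          have h2' := hu₁ _ ⟨hb, Sym2.mem_mk_left _ _⟩
          exact edi w (h1.trans h2'.symm)
        by_cases hsp : s(intp w, spk (intp w)) ∈ M₁
        · refine ⟨s(w, spk w),
            ⟨⟨w, Or.inr (Or.inr ⟨rfl, hsp, hkn⟩)⟩, Sym2.mem_mk_left _ _⟩, ?_⟩
          rintro e ⟨⟨x, hx | hx | hx⟩, hew⟩
          · obtain ⟨hxe, hnM⟩ := hx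
            exfalso
            apply hnM
            rw [resolve (bdp_invol hn) hxe hew]
            exact hb
          · obtain ⟨hxe, c1, c2, c3⟩ := hx
            exfalso
            rcases Sym2.mem_iff.1 (hxe ▸ hew) with rfl | hwx
            · exact c3 hsp
            · have hE : s(intp w, spk (intp w)) = s(x, spk x) := by
                rw [hwx, intp_invol hn x]
              exact c2 (hE ▸ hsp)
          · exact resolve spk_invol hx.1 hew
        · refine ⟨s(w, intp w),
            ⟨⟨w, Or.inr (Or.inl ⟨rfl, hin, hkn, hsp⟩)⟩, Sym2.mem_mk_left _ _⟩, ?_⟩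
          rintro e ⟨⟨x, hx | hx | hx⟩, hew⟩
          · obtain ⟨hxe, hnM⟩ := hx
            exfalso
            apply hnM
            rw [resolve (bdp_invol hn) hxe hew]
            exact hb
          · exact resolve (intp_invol hn) hx.1 hew
          · obtain ⟨hxe, d1, d2⟩ := hx
            exfalso
            rcases Sym2.mem_iff.1 (hxe ▸ hew) with rfl | hwx
            · exact hsp d1
            · have hE : s(intp w, spk (intp w)) = s(intp x, spk (intp x)) := by
                rw [hwx, ← spk_intp x, spk_invol (intp x)]
                exact Sym2.eq_swap
              exact hsp (hE ▸ d1)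
      · have he₁ : e₁ = s(w, spk w) ∨ e₁ = s(w, intp w) := by
          rcases hcl with h | h | h
          · exact Or.inl h
          · exact Or.inr h
          · exact absurd (h ▸ he₁M) hb
        refine ⟨s(w, bdp n w), ⟨⟨w, Or.inl ⟨rfl, hb⟩⟩, Sym2.mem_mk_left _ _⟩, ?_⟩
        rintro e ⟨⟨x, hx | hx | hx⟩, hew⟩
        · exact resolve (bdp_invol hn) hx.1 hew
        · obtain ⟨hxe, c1, c2, c3⟩ := hx
          exfalso
          have hC : s(w, intp w) ∉ M₁ ∧ s(w, spk w) ∉ M₁ := by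
            rcases Sym2.mem_iff.1 (hxe ▸ hew) with rfl | hwx
            · exact ⟨c1, c2⟩
            · constructor
              · intro hm
                apply c1
                rw [hwx, intp_invol hn x] at hm
                rwa [Sym2.eq_swap] at hm
              · intro hm
                apply c3
                rwa [hwx] at hm
          rcases he₁ with h | h
          · exact hC.2 (h ▸ he₁M)
          · exact hC.1 (h ▸ he₁M)
        · obtain ⟨hxe, d1, d2⟩ := hx
          exfalso
          have hd1 : s(intp w, spk (intp w)) ∈ M₁ := by
            rcases Sym2.mem_iff.1 (hxe ▸ hew) with rfl | hwx
            · exact d1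
            · have hE : s(intp w, spk (intp w)) = s(intp x, spk (intp x)) := by
                rw [hwx, ← spk_intp x, spk_invol (intp x)]
                exact Sym2.eq_swap
              rw [hE]
              exact d1
          have hd2 : s(w, spk w) ∉ M₁ := by
            rcases Sym2.mem_iff.1 (hxe ▸ hew) with rfl | hwx
            · exact d2
            · intro hm
              apply d2
              rw [hwx, spk_invol x] at hm
              rwa [Sym2.eq_swap] at hm
          rcases he₁ with h | h
          · exact hd2 (h ▸ he₁M)
          · have hne : s(w, intp w) ≠ s(intp w, spk (intp w)) := by
              intro hh
              rcases Sym2.eq_iff.1 hh with ⟨h1, -⟩ | ⟨h1, -⟩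
              · exact intp_ne hn w h1.symm
              · have hf := congrArg Prod.fst h1
                rw [spk_fst, intp_fst] at hf
                simp at hf
            obtain ⟨ew, ⟨hewM, hewm⟩, huw⟩ := huni (intp w)
            have hA := huw _ ⟨h ▸ he₁M, Sym2.mem_mk_right _ _⟩
            have hB := huw _ ⟨hd1, Sym2.mem_mk_left _ _⟩
            exact hne (hA.trans hB.symm)
  have hXfin : (Xcut n).Finite := by
    rw [Xcut]
    exact (((Set.finite_singleton _).insert _).insert _).insert _
  have hXM : M₂ ∩ Xcut n = Xcut n \ (M₁ ∩ Xcut n) := by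
    ext e
    constructor
    · rintro ⟨heM2, heX⟩
      exact ⟨heX, fun hc => hdisj e heM2 hc.1⟩
    · rintro ⟨heX, hne⟩
      have heM1 : e ∉ M₁ := fun h => hne ⟨h, heX⟩
      obtain ⟨x, hx⟩ := X_bdp hn heX
      exact ⟨⟨x, Or.inl ⟨hx, heM1⟩⟩, heX⟩
  refine ⟨M₂, hPM, ?_, ?_⟩
  · rw [hXM, Set.ncard_diff Set.inter_subset_right (hXfin.subset Set.inter_subset_right),
      h2, X_ncard hn]
  · ext e
    simp only [Set.mem_inter_iff, Set.mem_empty_iff_false, iff_false, not_and]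
    intro h1 h2'
    exact hdisj e h2' h1
end

section
/- Let n be a positive odd integer. Then the balanced papillon graph P_n does not have the PMH-property. -/
open SimpleGraph


namespace Pap14

open scoped Classical

abbrev ZK (n : ℕ) := ZMod (2*(n+n))

lemma two_dvd (n : ℕ) : (2:ℕ) ∣ 2*(n+n) := ⟨n+n, rfl⟩

/-- parity of an element of `ZMod (4n)` -/
def Od (n : ℕ) (x : ZK n) : Prop := ZMod.castHom (two_dvd n) (ZMod 2) x = 1

lemma od_cast (n m : ℕ) : Od n (m : ZK n) ↔ m % 2 = 1 := by
  unfold Od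
  rw [map_natCast, ← ZMod.natCast_mod m 2]
  have h : m % 2 = 0 ∨ m % 2 = 1 := by omega
  rcases h with h | h <;> rw [h] <;> simp

lemma od_val (n : ℕ) (hn : 1 ≤ n) (x : ZK n) : Od n x ↔ x.val % 2 = 1 := by
  haveI : NeZero (2*(n+n)) := ⟨by omega⟩
  conv_lhs => rw [show x = ((x.val : ℕ) : ZK n) from (ZMod.natCast_rightInverse x).symm]
  exact od_cast n x.val

lemma od_add_one (n : ℕ) (x : ZK n) : Od n (x + 1) ↔ ¬ Od n x := by
  unfold Od
  rw [map_add, map_one]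
  generalize (ZMod.castHom (two_dvd n) (ZMod 2)) x = a
  revert a; decide

lemma od_add_three (n : ℕ) (x : ZK n) : Od n (x + 3) ↔ ¬ Od n x := by
  unfold Od
  rw [map_add]
  have h3 : (ZMod.castHom (two_dvd n) (ZMod 2)) (3 : ZK n) = 1 := by
    have h : (3 : ZK n) = ((3:ℕ) : ZK n) := by push_cast; ring
    rw [h, map_natCast]; decide
  rw [h3]
  generalize (ZMod.castHom (two_dvd n) (ZMod 2)) x = a
  revert a; decide

lemma od_sub_one (n : ℕ) (x : ZK n) : Od n (x - 1) ↔ ¬ Od n x := by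
  have := od_add_one n (x - 1)
  rw [sub_add_cancel] at this
  tauto

lemma od_sub_two (n : ℕ) (x : ZK n) : Od n (x - 2) ↔ Od n x := by
  unfold Od
  rw [map_sub]
  have h2 : (ZMod.castHom (two_dvd n) (ZMod 2)) (2 : ZK n) = 0 := by
    have h : (2 : ZK n) = ((2:ℕ) : ZK n) := by push_cast; ring
    rw [h, map_natCast]; decide
  rw [h2, sub_zero]

lemma od_sub_three (n : ℕ) (x : ZK n) : Od n (x - 3) ↔ ¬ Od n x := by
  have := od_add_three n (x - 3)
  rw [sub_add_cancel] at this
  tauto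

lemma ne_of_od (n : ℕ) {x y : ZK n} (hx : Od n x) (hy : ¬ Od n y) : x ≠ y := by
  rintro rfl; exact hy hx

lemma cast_inj_of_lt (n : ℕ) {a b : ℕ} (ha : a < 2*(n+n)) (hb : b < 2*(n+n)) :
    ((a : ZK n) = (b : ZK n)) ↔ a = b := by
  rw [ZMod.natCast_eq_natCast_iff]
  constructor
  · intro h
    rw [Nat.ModEq, Nat.mod_eq_of_lt ha, Nat.mod_eq_of_lt hb] at h
    exact h
  · rintro rfl; rfl

lemma cast_eq_self (n : ℕ) (hn : 1 ≤ n) (x : ZK n) : ((x.val : ℕ) : ZK n) = x := by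
  haveI : NeZero (2*(n+n)) := ⟨by omega⟩
  exact ZMod.natCast_rightInverse x


lemma cast_ne' (n : ℕ) {a b : ℕ} (hab : a ≤ b) (hlt : b - a < 2*(n+n)) (hne : a ≠ b) :
    ((a : ℕ) : ZK n) ≠ ((b : ℕ) : ZK n) := by
  rw [Ne, ZMod.natCast_eq_natCast_iff, Nat.modEq_iff_dvd' hab]
  intro hdvd
  have := Nat.le_of_dvd (by omega) hdvd
  omega

lemma cast_add_eq (n : ℕ) {a b c : ℕ} (h : a + b = c) :
    ((a : ℕ) : ZK n) + ((b : ℕ) : ZK n) = ((c : ℕ) : ZK n) := by subst h; push_cast; ring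

lemma c3 (n : ℕ) : (((3:ℕ)) : ZK n) = 3 := by norm_num

lemma cast_K_add (n : ℕ) {a b : ℕ} (h : a = 2*(n+n) + b) :
    ((a : ℕ) : ZK n) = ((b : ℕ) : ZK n) := by
  subst h; rw [Nat.cast_add, ZMod.natCast_self, zero_add]

/-- the inner "skip/twist" partner -/
noncomputable def sg (n : ℕ) (x : ZK n) : ZK n :=
  if x = ((2*n-1 : ℕ) : ZK n) then ((4*n-1 : ℕ) : ZK n)
  else if x = ((4*n-1 : ℕ) : ZK n) then ((2*n-1 : ℕ) : ZK n)
  else if x = ((2 : ℕ) : ZK n) then ((2*n+2 : ℕ) : ZK n)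
  else if x = ((2*n+2 : ℕ) : ZK n) then ((2 : ℕ) : ZK n)
  else if Od n x then x + 3 else x - 3

/-- the outer partner -/
noncomputable def bt (n : ℕ) (x : ZK n) : ZK n :=
  if Od n x then x - 1 else x + 1

lemma od_c1 (n : ℕ) (hn : 1 ≤ n) : Od n ((2*n-1 : ℕ) : ZK n) := by rw [od_cast]; omega
lemma od_c2 (n : ℕ) (hn : 1 ≤ n) : Od n ((4*n-1 : ℕ) : ZK n) := by rw [od_cast]; omega
lemma nod_c3 (n : ℕ) : ¬ Od n (((2:ℕ)) : ZK n) := by rw [od_cast]; omega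
lemma nod_c4 (n : ℕ) : ¬ Od n ((2*n+2 : ℕ) : ZK n) := by rw [od_cast]; omega

lemma sg_eval1 (n : ℕ) : sg n ((2*n-1 : ℕ) : ZK n) = ((4*n-1 : ℕ) : ZK n) := by
  unfold sg; rw [if_pos rfl]

lemma sg_eval2 (n : ℕ) (hn : 1 ≤ n) : sg n ((4*n-1 : ℕ) : ZK n) = ((2*n-1 : ℕ) : ZK n) := by
  have h1 : ¬ (((4*n-1 : ℕ) : ZK n) = ((2*n-1 : ℕ) : ZK n)) := by
    rw [cast_inj_of_lt n (by omega) (by omega)]; omega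
  unfold sg; rw [if_neg h1, if_pos rfl]

lemma sg_eval3 (n : ℕ) (hn : 1 ≤ n) : sg n (((2:ℕ)) : ZK n) = ((2*n+2 : ℕ) : ZK n) := by
  have h1 : ¬ ((((2:ℕ)) : ZK n) = ((2*n-1 : ℕ) : ZK n)) :=
    fun h => (nod_c3 n) (h ▸ od_c1 n hn)
  have h2 : ¬ ((((2:ℕ)) : ZK n) = ((4*n-1 : ℕ) : ZK n)) :=
    fun h => (nod_c3 n) (h ▸ od_c2 n hn)
  unfold sg; rw [if_neg h1, if_neg h2, if_pos rfl]

lemma sg_eval4 (n : ℕ) (hn : 1 ≤ n) : sg n ((2*n+2 : ℕ) : ZK n) = (((2:ℕ)) : ZK n) := by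
  have h1 : ¬ (((2*n+2 : ℕ) : ZK n) = ((2*n-1 : ℕ) : ZK n)) :=
    fun h => (nod_c4 n) (h ▸ od_c1 n hn)
  have h2 : ¬ (((2*n+2 : ℕ) : ZK n) = ((4*n-1 : ℕ) : ZK n)) :=
    fun h => (nod_c4 n) (h ▸ od_c2 n hn)
  have h3 : ¬ (((2*n+2 : ℕ) : ZK n) = (((2:ℕ)) : ZK n)) :=
    (cast_ne' n (by omega) (by omega) (by omega)).symm
  unfold sg; rw [if_neg h1, if_neg h2, if_neg h3, if_pos rfl]

lemma sg_eval_odd (n : ℕ) (hn : 1 ≤ n) {x : ZK n} (hx : Od n x)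
    (h1 : x ≠ ((2*n-1 : ℕ) : ZK n)) (h2 : x ≠ ((4*n-1 : ℕ) : ZK n)) :
    sg n x = x + 3 := by
  have h3 : x ≠ (((2:ℕ)) : ZK n) := ne_of_od n hx (nod_c3 n)
  have h4 : x ≠ ((2*n+2 : ℕ) : ZK n) := ne_of_od n hx (nod_c4 n)
  unfold sg; rw [if_neg h1, if_neg h2, if_neg h3, if_neg h4, if_pos hx]

lemma sg_eval_even (n : ℕ) (hn : 1 ≤ n) {x : ZK n} (hx : ¬ Od n x)
    (h3 : x ≠ (((2:ℕ)) : ZK n)) (h4 : x ≠ ((2*n+2 : ℕ) : ZK n)) :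
    sg n x = x - 3 := by
  have h1 : x ≠ ((2*n-1 : ℕ) : ZK n) := fun h => hx (h ▸ od_c1 n hn)
  have h2 : x ≠ ((4*n-1 : ℕ) : ZK n) := fun h => hx (h ▸ od_c2 n hn)
  unfold sg; rw [if_neg h1, if_neg h2, if_neg h3, if_neg h4, if_neg hx]

lemma cast2_sub3 (n : ℕ) (hn : 1 ≤ n) : (((2:ℕ)) : ZK n) - 3 = ((4*n-1 : ℕ) : ZK n) := by
  have h : ((4*n-1 : ℕ) : ZK n) + 3 = (((4*n+2:ℕ)) : ZK n) := by
    rw [← c3 n]; exact cast_add_eq n (by omega)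
  have h2 : (((4*n+2:ℕ)) : ZK n) = (((2:ℕ)) : ZK n) := cast_K_add n (by omega)
  rw [eq_comm, eq_sub_iff_add_eq, h, h2]

lemma sg_invol (n : ℕ) (hn : 1 ≤ n) (x : ZK n) : sg n (sg n x) = x := by
  by_cases h1 : x = ((2*n-1 : ℕ) : ZK n)
  · subst h1; rw [sg_eval1, sg_eval2 n hn]
  by_cases h2 : x = ((4*n-1 : ℕ) : ZK n)
  · subst h2; rw [sg_eval2 n hn, sg_eval1]
  by_cases h3 : x = (((2:ℕ)) : ZK n)
  · subst h3; rw [sg_eval3 n hn, sg_eval4 n hn]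
  by_cases h4 : x = ((2*n+2 : ℕ) : ZK n)
  · subst h4; rw [sg_eval4 n hn, sg_eval3 n hn]
  by_cases hx : Od n x
  · rw [sg_eval_odd n hn hx h1 h2]
    have hx3 : ¬ Od n (x + 3) := by rw [od_add_three]; tauto
    have g3 : x + 3 ≠ (((2:ℕ)) : ZK n) := by
      intro h
      apply h2
      have : x = (((2:ℕ)) : ZK n) - 3 := by rw [← h]; ring
      rw [this, cast2_sub3 n hn]
    have g4 : x + 3 ≠ ((2*n+2 : ℕ) : ZK n) := by
      intro h
      apply h1
      have hh : ((2*n-1 : ℕ) : ZK n) + 3 = ((2*n+2 : ℕ) : ZK n) := by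
        rw [← c3 n]; exact cast_add_eq n (by omega)
      have : x = ((2*n+2 : ℕ) : ZK n) - 3 := by rw [← h]; ring
      rw [this, ← hh]; ring
    rw [sg_eval_even n hn hx3 g3 g4]; ring
  · rw [sg_eval_even n hn hx h3 h4]
    have hx3 : Od n (x - 3) := by rw [od_sub_three]; tauto
    have g1 : x - 3 ≠ ((2*n-1 : ℕ) : ZK n) := by
      intro h
      apply h4
      have hh : ((2*n-1 : ℕ) : ZK n) + 3 = ((2*n+2 : ℕ) : ZK n) := by
        rw [← c3 n]; exact cast_add_eq n (by omega)
      have : x = ((2*n-1 : ℕ) : ZK n) + 3 := by rw [← h]; ring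
      rw [this, hh]
    have g2 : x - 3 ≠ ((4*n-1 : ℕ) : ZK n) := by
      intro h
      apply h3
      have : x = ((4*n-1 : ℕ) : ZK n) + 3 := by rw [← h]; ring
      rw [this, ← cast2_sub3 n hn]; ring
    rw [sg_eval_odd n hn hx3 g1 g2]; ring

lemma bt_eval_odd (n : ℕ) {x : ZK n} (hx : Od n x) : bt n x = x - 1 := by
  unfold bt; rw [if_pos hx]

lemma bt_eval_even (n : ℕ) {x : ZK n} (hx : ¬ Od n x) : bt n x = x + 1 := by
  unfold bt; rw [if_neg hx]

lemma bt_invol (n : ℕ) (x : ZK n) : bt n (bt n x) = x := by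
  by_cases hx : Od n x
  · rw [bt_eval_odd n hx, bt_eval_even n (by rw [od_sub_one]; tauto)]; ring
  · rw [bt_eval_even n hx, bt_eval_odd n (by rw [od_add_one]; tauto)]; ring

lemma c1 (n : ℕ) : (((1:ℕ)) : ZK n) = 1 := by norm_num
lemma c4 (n : ℕ) : (((4:ℕ)) : ZK n) = 4 := by norm_num

lemma step_up (n : ℕ) (hn : 1 ≤ n) (T : Set (ZK n))
    (Hs : ∀ x, x ∈ T ↔ sg n x ∈ T) (Hb : ∀ x, x ∈ T ↔ bt n x ∈ T)
    (a : ℕ) (hodd : a % 2 = 1) (hlt : a < 2*(n+n))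
    (h1 : ((a:ℕ) : ZK n) ≠ ((2*n-1 : ℕ) : ZK n)) (h2 : ((a:ℕ) : ZK n) ≠ ((4*n-1 : ℕ) : ZK n)) :
    (((a:ℕ) : ZK n) ∈ T ↔ ((a+4 : ℕ) : ZK n) ∈ T) := by
  have hOd : Od n ((a:ℕ) : ZK n) := by rw [od_cast]; omega
  have hsg : sg n ((a:ℕ) : ZK n) = ((a:ℕ) : ZK n) + 3 := sg_eval_odd n hn hOd h1 h2
  have hOd3 : ¬ Od n (((a:ℕ) : ZK n) + 3) := by rw [od_add_three]; tauto
  have hbt : bt n (((a:ℕ) : ZK n) + 3) = ((a:ℕ) : ZK n) + 4 := by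
    rw [bt_eval_even n hOd3]; ring
  have hc : ((a+4 : ℕ) : ZK n) = ((a:ℕ) : ZK n) + 4 := by
    rw [← c4 n]; exact (cast_add_eq n rfl).symm
  rw [Hs ((a:ℕ) : ZK n), hsg, Hb (((a:ℕ) : ZK n) + 3), hbt, hc]

lemma step_down (n : ℕ) (hn : 1 ≤ n) (T : Set (ZK n))
    (Hs : ∀ x, x ∈ T ↔ sg n x ∈ T) (Hb : ∀ x, x ∈ T ↔ bt n x ∈ T)
    (a : ℕ) (hodd : a % 2 = 1) (ha4 : 4 ≤ a) (hlt : a < 2*(n+n))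
    (h3 : a ≠ 3) (h23 : a ≠ 2*n+3) :
    (((a:ℕ) : ZK n) ∈ T ↔ ((a-4 : ℕ) : ZK n) ∈ T) := by
  have hn2 : 2 ≤ n := by omega
  have hOd : Od n ((a:ℕ) : ZK n) := by rw [od_cast]; omega
  have hbt : bt n ((a:ℕ) : ZK n) = ((a-1 : ℕ) : ZK n) := by
    rw [bt_eval_odd n hOd]
    have : ((a-1 : ℕ) : ZK n) + 1 = ((a:ℕ) : ZK n) := by
      rw [← c1 n]; exact cast_add_eq n (by omega)
    rw [sub_eq_iff_eq_add]; exact this.symm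
  have hOd1 : ¬ Od n ((a-1 : ℕ) : ZK n) := by rw [od_cast]; omega
  have g3 : ((a-1 : ℕ) : ZK n) ≠ (((2:ℕ)) : ZK n) := by
    rw [Ne, cast_inj_of_lt n (by omega) (by omega)]; omega
  have g4 : ((a-1 : ℕ) : ZK n) ≠ ((2*n+2 : ℕ) : ZK n) := by
    rw [Ne, cast_inj_of_lt n (by omega) (by omega)]; omega
  have hsg : sg n ((a-1 : ℕ) : ZK n) = ((a-4-1+4 : ℕ) : ZK n) - 3 := by
    rw [sg_eval_even n hn hOd1 g3 g4]
    congr 1; congr 1; omega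
  have hfin : ((a-4-1+4 : ℕ) : ZK n) - 3 = ((a-4 : ℕ) : ZK n) := by
    rw [sub_eq_iff_eq_add, ← c3 n]
    exact (cast_add_eq n (by omega)).symm
  rw [Hb ((a:ℕ) : ZK n), hbt, Hs ((a-1 : ℕ) : ZK n), hsg, hfin]

lemma reach (n : ℕ) (hn : 1 ≤ n) (hodd : Odd n) (T : Set (ZK n))
    (Hs : ∀ x, x ∈ T ↔ sg n x ∈ T) (Hb : ∀ x, x ∈ T ↔ bt n x ∈ T) :
    ∀ x : ZK n, (x ∈ T ↔ (((1:ℕ)) : ZK n) ∈ T) := by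
  haveI : NeZero (2*(n+n)) := ⟨by omega⟩
  obtain ⟨m, hm⟩ := hodd
  have C1 : ∀ k : ℕ, 4*k+1 ≤ 2*n-1 → (((4*k+1 : ℕ) : ZK n) ∈ T ↔ (((1:ℕ)) : ZK n) ∈ T) := by
    intro k
    induction k with
    | zero => intro _; norm_num
    | succ k ih =>
      intro hb
      have hprev := ih (by omega)
      have hstep := step_up n hn T Hs Hb (4*k+1) (by omega) (by omega)
        (by rw [Ne, cast_inj_of_lt n (by omega) (by omega)]; omega)
        (by rw [Ne, cast_inj_of_lt n (by omega) (by omega)]; omega)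
      rw [show (4*(k+1)+1 : ℕ) = 4*k+1+4 by omega]
      rw [← hstep]; exact hprev
  have C2 : ((2*n-1 : ℕ) : ZK n) ∈ T ↔ (((1:ℕ)) : ZK n) ∈ T := by
    have := C1 m (by omega)
    rwa [show (4*m+1 : ℕ) = 2*n-1 by omega] at this
  have C3 : ((4*n-1 : ℕ) : ZK n) ∈ T ↔ (((1:ℕ)) : ZK n) ∈ T := by
    rw [← sg_eval1 n, ← Hs]; exact C2
  have C4 : ∀ k : ℕ, k ≤ n-1 → (((4*n-1-4*k : ℕ) : ZK n) ∈ T ↔ (((1:ℕ)) : ZK n) ∈ T) := by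
    intro k
    induction k with
    | zero => intro _; simpa using C3
    | succ k ih =>
      intro hb
      have hprev := ih (by omega)
      have hstep := step_down n hn T Hs Hb (4*n-1-4*k) (by omega) (by omega) (by omega)
        (by omega) (by omega)
      rw [show (4*n-1-4*(k+1) : ℕ) = 4*n-1-4*k-4 by omega]
      rw [← hstep]; exact hprev
  have C5 : ∀ q : ℕ, q ≤ n-1 → (((4*q+3 : ℕ) : ZK n) ∈ T ↔ (((1:ℕ)) : ZK n) ∈ T) := by
    intro q hq
    have := C4 (n-1-q) (by omega)
    rwa [show (4*n-1-4*(n-1-q) : ℕ) = 4*q+3 by omega] at this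
  have C6 : ((2*n+3 : ℕ) : ZK n) ∈ T ↔ (((1:ℕ)) : ZK n) ∈ T := by
    have h3 : (((3:ℕ)) : ZK n) ∈ T ↔ (((1:ℕ)) : ZK n) ∈ T := by
      have := C5 0 (by omega)
      rwa [show (4*0+3 : ℕ) = 3 by omega] at this
    have hOd3 : Od n (((3:ℕ)) : ZK n) := by rw [od_cast]
    have hb3 : bt n (((3:ℕ)) : ZK n) = (((2:ℕ)) : ZK n) := by
      rw [bt_eval_odd n hOd3, sub_eq_iff_eq_add, ← c1 n]
      exact (cast_add_eq n (by omega)).symm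
    have hb22 : bt n ((2*n+2 : ℕ) : ZK n) = ((2*n+3 : ℕ) : ZK n) := by
      rw [bt_eval_even n (nod_c4 n), ← c1 n]
      exact cast_add_eq n (by omega)
    have e1 : ((2*n+3 : ℕ) : ZK n) ∈ T ↔ ((2*n+2 : ℕ) : ZK n) ∈ T := by
      rw [← hb22]; exact (Hb _).symm
    have e2 : ((2*n+2 : ℕ) : ZK n) ∈ T ↔ (((2:ℕ)) : ZK n) ∈ T := by
      rw [← sg_eval3 n hn]; exact (Hs _).symm
    have e3 : (((2:ℕ)) : ZK n) ∈ T ↔ (((3:ℕ)) : ZK n) ∈ T := by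
      rw [← hb3]; exact (Hb _).symm
    exact e1.trans (e2.trans (e3.trans h3))
  have C7 : ∀ k : ℕ, 2*n+3+4*k ≤ 4*n-3 → (((2*n+3+4*k : ℕ) : ZK n) ∈ T ↔ (((1:ℕ)) : ZK n) ∈ T) := by
    intro k
    induction k with
    | zero => intro _; simpa using C6
    | succ k ih =>
      intro hb
      have hprev := ih (by omega)
      have hstep := step_up n hn T Hs Hb (2*n+3+4*k) (by omega) (by omega)
        (by rw [Ne, cast_inj_of_lt n (by omega) (by omega)]; omega)
        (by rw [Ne, cast_inj_of_lt n (by omega) (by omega)]; omega)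
      rw [show (2*n+3+4*(k+1) : ℕ) = 2*n+3+4*k+4 by omega]
      rw [← hstep]; exact hprev
  have C8 : ∀ q : ℕ, q ≤ n-1 → (((4*q+1 : ℕ) : ZK n) ∈ T ↔ (((1:ℕ)) : ZK n) ∈ T) := by
    intro q hq
    by_cases hsmall : 4*q+1 ≤ 2*n-1
    · exact C1 q hsmall
    · have hq2 : m + 1 ≤ q := by omega
      have := C7 (q - m - 1) (by omega)
      rwa [show (2*n+3+4*(q-m-1) : ℕ) = 4*q+1 by omega] at this
  intro x
  have hx : x = ((x.val : ℕ) : ZK n) := (cast_eq_self n hn x).symm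
  have hv : x.val < 2*(n+n) := ZMod.val_lt x
  have hrep : x.val = 4*(x.val/4) + x.val % 4 := by omega
  set q := x.val / 4 with hqdef
  have hr4 : x.val % 4 = 0 ∨ x.val % 4 = 1 ∨ x.val % 4 = 2 ∨ x.val % 4 = 3 := by omega
  rcases hr4 with h | h | h | h
  · -- r = 0 : x = cast(4q) = bt (cast (4q+1))
    have hq : q ≤ n-1 := by omega
    have hOd : Od n ((4*q+1 : ℕ) : ZK n) := by rw [od_cast]; omega
    have hbt : bt n ((4*q+1 : ℕ) : ZK n) = ((4*q : ℕ) : ZK n) := by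
      rw [bt_eval_odd n hOd, sub_eq_iff_eq_add, ← c1 n]
      exact (cast_add_eq n (by omega)).symm
    rw [hx, show x.val = 4*q by omega, ← hbt, ← Hb]
    exact C8 q hq
  · rw [hx, show x.val = 4*q+1 by omega]
    exact C8 q (by omega)
  · -- r = 2 : x = cast(4q+2) = bt (cast (4q+3))
    have hq : q ≤ n-1 := by omega
    have hOd : Od n ((4*q+3 : ℕ) : ZK n) := by rw [od_cast]; omega
    have hbt : bt n ((4*q+3 : ℕ) : ZK n) = ((4*q+2 : ℕ) : ZK n) := by
      rw [bt_eval_odd n hOd, sub_eq_iff_eq_add, ← c1 n]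
      exact (cast_add_eq n (by omega)).symm
    rw [hx, show x.val = 4*q+2 by omega, ← hbt, ← Hb]
    exact C5 q hq
  · rw [hx, show x.val = 4*q+3 by omega]
    exact C5 q (by omega)


section Graph

def U (n : ℕ) (x : ZK n) : PapVert (2*(n+n)) := (false, x)
def W (n : ℕ) (x : ZK n) : PapVert (2*(n+n)) := (true, x)
def spk (n : ℕ) (x : ZK n) : Sym2 (PapVert (2*(n+n))) := s(U n x, W n x)
def opair (n : ℕ) (y : ZK n) : Sym2 (PapVert (2*(n+n))) := s(U n y, U n (y+1))
def ipair (n : ℕ) (y : ZK n) : Sym2 (PapVert (2*(n+n))) := s(W n y, W n (y+1))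
noncomputable def iskip (n : ℕ) (y : ZK n) : Sym2 (PapVert (2*(n+n))) := s(W n y, W n (sg n y))

/-- the "bad" perfect matching -/
def MM (n : ℕ) : Set (Sym2 (PapVert (2*(n+n)))) :=
  {e | ∃ y, Od n y ∧ (e = opair n y ∨ e = ipair n y)}

lemma at_outer (n : ℕ) (hn : 1 ≤ n) {e : Sym2 (PapVert (2*(n+n)))}
    (he : e ∈ papillonEdges n n) {x : ZK n} (hx : U n x ∈ e) :
    e = spk n x ∨ ∃ y, e = opair n y ∧ (x = y ∨ x = y + 1) := by
  simp only [papillonEdges, Set.mem_setOf_eq, min_self] at he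
  rcases he with ⟨i, hi1, hi2, rfl⟩ | rfl | ⟨i, hi1, hi2, rfl⟩ | ⟨i, hi1, hi2, rfl⟩ |
    ⟨i, hi1, hi2, hin, rfl⟩ | rfl | rfl
  · -- outer cycle edge
    simp only [U, pu, Sym2.mem_iff, Prod.mk.injEq, true_and] at hx
    right
    refine ⟨((i:ℕ) : ZK n), ?_, ?_⟩
    · simp only [opair, U, pu]
      congr 2
      push_cast; ring
    · rcases hx with h | h
      · exact Or.inl h
      · right; rw [h]; push_cast; ring
  · -- wrap-around outer edge
    simp only [U, pu, Sym2.mem_iff, Prod.mk.injEq, true_and] at hx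
    right
    refine ⟨(0 : ZK n), ?_, ?_⟩
    · simp only [opair, U, pu]
      congr 2
      · rw [ZMod.natCast_self]
      · rw [zero_add]; norm_num
    · rcases hx with h | h
      · left; rw [h, ZMod.natCast_self]
      · right; rw [h, zero_add]; norm_num
  · -- spoke
    simp only [U, pu, pv, Sym2.mem_iff, Prod.mk.injEq, true_and] at hx
    rcases hx with h | h
    · left
      simp only [spk, U, W, pu, pv]
      rw [h]
    · exact absurd h.1 (by simp)
  · simp only [U, pv, Sym2.mem_iff, Prod.mk.injEq] at hx
    rcases hx with h | h <;> exact absurd h.1 (by simp)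
  · simp only [U, pv, Sym2.mem_iff, Prod.mk.injEq] at hx
    rcases hx with h | h <;> exact absurd h.1 (by simp)
  · simp only [U, pv, Sym2.mem_iff, Prod.mk.injEq] at hx
    rcases hx with h | h <;> exact absurd h.1 (by simp)
  · simp only [U, pv, Sym2.mem_iff, Prod.mk.injEq] at hx
    rcases hx with h | h <;> exact absurd h.1 (by simp)

lemma at_inner (n : ℕ) (hn : 1 ≤ n) {e : Sym2 (PapVert (2*(n+n)))}
    (he : e ∈ papillonEdges n n) {x : ZK n} (hx : W n x ∈ e) :
    e = spk n x ∨ (∃ y, Od n y ∧ e = ipair n y ∧ (x = y ∨ x = y + 1))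
      ∨ (∃ y, e = iskip n y ∧ (x = y ∨ x = sg n y)) := by
  simp only [papillonEdges, Set.mem_setOf_eq, min_self] at he
  rcases he with ⟨i, hi1, hi2, rfl⟩ | rfl | ⟨i, hi1, hi2, rfl⟩ | ⟨i, hi1, hi2, rfl⟩ |
    ⟨i, hi1, hi2, hin, rfl⟩ | rfl | rfl
  · simp only [W, pu, Sym2.mem_iff, Prod.mk.injEq] at hx
    rcases hx with h | h <;> exact absurd h.1 (by simp)
  · simp only [W, pu, Sym2.mem_iff, Prod.mk.injEq] at hx
    rcases hx with h | h <;> exact absurd h.1 (by simp)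
  · -- spoke
    simp only [W, pu, pv, Sym2.mem_iff, Prod.mk.injEq, true_and] at hx
    rcases hx with h | h
    · exact absurd h.1 (by simp)
    · left
      simp only [spk, U, W, pu, pv]
      rw [h]
  · -- inner pair
    simp only [W, pv, Sym2.mem_iff, Prod.mk.injEq, true_and] at hx
    right; left
    have hcast : ((2*i : ℕ) : ZK n) = ((2*i-1 : ℕ) : ZK n) + 1 := by
      rw [← c1 n]; exact (cast_add_eq n (by omega)).symm
    refine ⟨((2*i-1 : ℕ) : ZK n), ?_, ?_, ?_⟩
    · rw [od_cast]; omega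
    · simp only [ipair, W, pv]
      congr 2
    · rcases hx with h | h
      · exact Or.inl h
      · right; rw [h, hcast]
  · -- inner skip
    simp only [W, pv, Sym2.mem_iff, Prod.mk.injEq, true_and] at hx
    right; right
    have hsg : sg n ((2*i-1 : ℕ) : ZK n) = ((2*i+2 : ℕ) : ZK n) := by
      have hOd : Od n ((2*i-1 : ℕ) : ZK n) := by rw [od_cast]; omega
      rw [sg_eval_odd n hn hOd
        (by rw [Ne, cast_inj_of_lt n (by omega) (by omega)]; omega)
        (by rw [Ne, cast_inj_of_lt n (by omega) (by omega)]; omega)]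
      rw [← c3 n]; exact cast_add_eq n (by omega)
    refine ⟨((2*i-1 : ℕ) : ZK n), ?_, ?_⟩
    · simp only [iskip, W, pv]
      congr 2
      rw [hsg]
    · rcases hx with h | h
      · exact Or.inl h
      · right; rw [h, hsg]
  · -- twist edge v2 -- v_{2n+2}
    simp only [W, pv, Sym2.mem_iff, Prod.mk.injEq, true_and] at hx
    right; right
    have hsg := sg_eval3 n hn
    refine ⟨(((2:ℕ)) : ZK n), ?_, ?_⟩
    · simp only [iskip, W, pv]
      congr 2
      rw [hsg]
    · rcases hx with h | h
      · exact Or.inl h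
      · right; rw [h, hsg]
  · -- twist edge v_{2n-1} -- v_{4n-1}
    simp only [W, pv, Sym2.mem_iff, Prod.mk.injEq, true_and] at hx
    right; right
    have h2 : (2*(n+n)-1 : ℕ) = 4*n-1 := by omega
    have hsg := sg_eval1 n
    refine ⟨((2*n-1 : ℕ) : ZK n), ?_, ?_⟩
    · simp only [iskip, W, pv]
      congr 2
      rw [h2, hsg]
    · rcases hx with h | h
      · exact Or.inl h
      · right; rw [h, h2, hsg]

end Graph

end Pap14

namespace Pap14

section Graph2

lemma opair_mem (n : ℕ) (hn : 1 ≤ n) (y : ZK n) : opair n y ∈ (papillon n n).edgeSet := by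
  haveI : NeZero (2*(n+n)) := ⟨by omega⟩
  haveI : Fact (1 < 2*(n+n)) := ⟨by omega⟩
  rw [papillon, edgeSet_fromEdgeSet, Set.mem_diff]
  constructor
  · simp only [papillonEdges, Set.mem_setOf_eq, min_self]
    by_cases h0 : y = 0
    · right; left
      subst h0
      simp only [opair, U, pu]
      congr 2
      · rw [ZMod.natCast_self]
      · rw [zero_add]; norm_num
    · left
      refine ⟨y.val, ?_, ?_, ?_⟩
      · have : y.val ≠ 0 := fun h => h0 ((ZMod.val_eq_zero y).mp h)
        omega
      · have := ZMod.val_lt y; omega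
      · simp only [opair, U, pu]
        congr 2
        · rw [cast_eq_self n hn]
        · rw [← c1 n, ← cast_add_eq n rfl, cast_eq_self n hn]
  · simp only [Set.mem_setOf_eq, opair, Sym2.mem_diagSet, Sym2.mk_isDiag_iff, U, Prod.mk.injEq, true_and]
    intro h
    exact one_ne_zero ((left_eq_add).mp h)

lemma ipair_mem (n : ℕ) (hn : 1 ≤ n) {y : ZK n} (hy : Od n y) :
    ipair n y ∈ (papillon n n).edgeSet := by
  haveI : NeZero (2*(n+n)) := ⟨by omega⟩
  haveI : Fact (1 < 2*(n+n)) := ⟨by omega⟩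
  have hv : y.val % 2 = 1 := (od_val n hn y).mp hy
  have hlt : y.val < 2*(n+n) := ZMod.val_lt y
  rw [papillon, edgeSet_fromEdgeSet, Set.mem_diff]
  constructor
  · simp only [papillonEdges, Set.mem_setOf_eq, min_self]
    right; right; right; left
    refine ⟨(y.val+1)/2, by omega, by omega, ?_⟩
    simp only [ipair, W, pv]
    congr 2
    · rw [show 2*((y.val+1)/2)-1 = y.val by omega, cast_eq_self n hn]
    · rw [show 2*((y.val+1)/2) = y.val+1 by omega, ← c1 n, ← cast_add_eq n rfl,
        cast_eq_self n hn]
  · simp only [Set.mem_setOf_eq, ipair, Sym2.mem_diagSet, Sym2.mk_isDiag_iff, W, Prod.mk.injEq, true_and]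
    intro h
    exact one_ne_zero ((left_eq_add).mp h)

lemma MM_perf (n : ℕ) (hn : 1 ≤ n) : IsPerfMatching (papillon n n) (MM n) := by
  constructor
  · rintro e ⟨y, hy, rfl | rfl⟩
    · exact opair_mem n hn y
    · exact ipair_mem n hn hy
  · rintro ⟨b, x⟩
    have key : ∀ (z : ZK n) (hz : Od n z) (b : Bool),
        ∃! e, e ∈ MM n ∧ ((b, z) : PapVert (2*(n+n))) ∈ e := by
      intro z hz b
      cases b
      · refine ⟨opair n z, ⟨⟨z, hz, Or.inl rfl⟩, by simp [opair, U, Sym2.mem_iff]⟩, ?_⟩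
        rintro e' ⟨⟨y', hy', rfl | rfl⟩, hv'⟩
        · simp only [opair, U, Sym2.mem_iff, Prod.mk.injEq] at hv'
          rcases hv' with ⟨_, h⟩ | ⟨_, h⟩
          · rw [h]
          · exfalso
            rw [h] at hz
            rw [od_add_one] at hz
            exact hz hy'
        · exfalso
          simp only [ipair, W, Sym2.mem_iff, Prod.mk.injEq] at hv'
          rcases hv' with ⟨h, _⟩ | ⟨h, _⟩ <;> simp at h
      · refine ⟨ipair n z, ⟨⟨z, hz, Or.inr rfl⟩, by simp [ipair, W, Sym2.mem_iff]⟩, ?_⟩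
        rintro e' ⟨⟨y', hy', rfl | rfl⟩, hv'⟩
        · exfalso
          simp only [opair, U, Sym2.mem_iff, Prod.mk.injEq] at hv'
          rcases hv' with ⟨h, _⟩ | ⟨h, _⟩ <;> simp at h
        · simp only [ipair, W, Sym2.mem_iff, Prod.mk.injEq] at hv'
          rcases hv' with ⟨_, h⟩ | ⟨_, h⟩
          · rw [h]
          · exfalso
            rw [h] at hz
            rw [od_add_one] at hz
            exact hz hy'
    by_cases hx : Od n x
    · exact key x hx b
    · have hx1 : Od n (x - 1) := by rw [od_sub_one]; exact hx
      obtain ⟨e, ⟨heM, hve⟩, huniq⟩ := key (x-1) hx1 b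
      have hmem : ((b, x) : PapVert (2*(n+n))) ∈ e := by
        rcases heM with ⟨y', hy', rfl | rfl⟩
        · simp only [opair, U, Sym2.mem_iff, Prod.mk.injEq] at hve ⊢
          rcases hve with ⟨hb, h⟩ | ⟨hb, h⟩
          · right
            refine ⟨hb, ?_⟩
            rw [← h]; ring
          · exfalso
            rw [h] at hx1
            rw [od_add_one] at hx1
            exact hx1 hy'
        · simp only [ipair, W, Sym2.mem_iff, Prod.mk.injEq] at hve ⊢
          rcases hve with ⟨hb, h⟩ | ⟨hb, h⟩
          · right
            refine ⟨hb, ?_⟩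
            rw [← h]; ring
          · exfalso
            rw [h] at hx1
            rw [od_add_one] at hx1
            exact hx1 hy'
      refine ⟨e, ⟨heM, hmem⟩, ?_⟩
      rintro e' ⟨⟨y', hy', he'⟩, hv'⟩
      apply huniq
      refine ⟨⟨y', hy', he'⟩, ?_⟩
      rcases he' with rfl | rfl
      · simp only [opair, U, Sym2.mem_iff, Prod.mk.injEq] at hv' ⊢
        rcases hv' with ⟨hb, h⟩ | ⟨hb, h⟩
        · exfalso; rw [← h] at hy'; exact hx hy'
        · left
          refine ⟨hb, ?_⟩
          rw [h]; ring
      · simp only [ipair, W, Sym2.mem_iff, Prod.mk.injEq] at hv' ⊢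
        rcases hv' with ⟨hb, h⟩ | ⟨hb, h⟩
        · exfalso; rw [← h] at hy'; exact hx hy'
        · left
          refine ⟨hb, ?_⟩
          rw [h]; ring

end Graph2

section WalkLemmas

variable {Vt : Type*} {G : SimpleGraph Vt}

lemma walk_closed (S : Set Vt) (F : Set (Sym2 Vt))
    (hcl : ∀ a b : Vt, s(a,b) ∈ F → (a ∈ S ↔ b ∈ S)) :
    ∀ {a b : Vt} (p : G.Walk a b), (∀ e ∈ p.edges, e ∈ F) → (a ∈ S ↔ b ∈ S) := by
  intro a b p
  induction p with
  | nil => intro _; rfl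
  | cons h q ih =>
    intro hF
    exact (hcl _ _ (hF _ (by simp))).trans (ih (fun e he => hF e (by simp [he])))

lemma cycle_two_edges [DecidableEq Vt] {u w : Vt}
    (c : G.Walk u u) (hc : c.IsCycle) (hw : w ∈ c.support) :
    ∃ a b, a ≠ b ∧ s(w,a) ∈ c.edges ∧ s(w,b) ∈ c.edges := by
  have hrot : (c.rotate w hw).IsCycle := hc.rotate hw
  have hperm := c.rotate_edges w hw
  suffices h : ∃ a b, a ≠ b ∧ s(w,a) ∈ (c.rotate w hw).edges ∧ s(w,b) ∈ (c.rotate w hw).edges by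
    obtain ⟨a, b, hab, h1, h2⟩ := h
    exact ⟨a, b, hab, hperm.mem_iff.mp h1, hperm.mem_iff.mp h2⟩
  clear hperm hc
  generalize c.rotate w hw = c₂ at hrot ⊢
  cases c₂ with
  | nil => exact absurd rfl hrot.ne_nil
  | @cons _ v _ h p =>
    have hlen : 3 ≤ (Walk.cons h p).length := hrot.three_le_length
    have hnodup : (Walk.cons h p).edges.Nodup := hrot.edges_nodup
    cases hrev : (Walk.cons h p).reverse with
    | nil =>
      exfalso
      have := congrArg Walk.length hrev
      rw [Walk.length_reverse] at this
      simp at this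
    | @cons _ z _ h' q =>
      have hedges : (Walk.cons h p).edges.reverse = s(w,z) :: q.edges := by
        rw [← Walk.edges_reverse, hrev, Walk.edges_cons]
      refine ⟨v, z, ?_, by simp [Walk.edges_cons], ?_⟩
      · intro hvz
        subst hvz
        have hL : (Walk.cons h p).edges = q.edges.reverse ++ [s(w,v)] := by
          rw [← List.reverse_reverse (Walk.cons h p).edges, hedges]
          simp
        rw [Walk.edges_cons] at hL hnodup
        cases hqe : q.edges.reverse with
        | nil =>
          rw [hqe] at hL
          have h0 : p.edges = [] := by
            have := congrArg List.tail hL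
            simpa using this
          have h1 : p.edges.length = 0 := by rw [h0]; rfl
          rw [Walk.length_edges] at h1
          have h2 : (Walk.cons h p).length = p.length + 1 := by simp
          omega
        | cons E t =>
          rw [hqe] at hL
          simp only [List.cons_append] at hL
          have h1 := hL
          injection h1 with hE hT
          have : s(w,v) ∈ p.edges := by
            rw [hT]
            simp
          rw [List.nodup_cons] at hnodup
          exact hnodup.1 this
      · have : s(w,z) ∈ (Walk.cons h p).edges.reverse := by rw [hedges]; simp
        rwa [List.mem_reverse] at this

lemma matching_uniq {M : Set (Sym2 Vt)} (hM : IsPerfMatching G M)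
    {e e' : Sym2 Vt} {v : Vt} (he : e ∈ M) (hv : v ∈ e) (he' : e' ∈ M) (hv' : v ∈ e') :
    e = e' := by
  obtain ⟨f, _, hf⟩ := hM.2 v
  rw [hf e ⟨he, hv⟩, hf e' ⟨he', hv'⟩]

lemma not_mem_both [DecidableEq Vt] {M N : Set (Sym2 Vt)}
    (hM : IsPerfMatching G M) (hN : IsPerfMatching G N) {x₀ : Vt} {c : G.Walk x₀ x₀}
    (hc : c.IsHamiltonianCycle) (hE : ∀ e ∈ c.edges, e ∈ M ∪ N)
    {e : Sym2 Vt} (heM : e ∈ M) (heN : e ∈ N) {w : Vt} (hw : w ∈ e) : False := by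
  obtain ⟨a, b, hab, ha, hb⟩ := cycle_two_edges c hc.isCycle (hc.mem_support w)
  have key : ∀ {z : Vt}, s(w,z) ∈ c.edges → s(w,z) = e := by
    intro z hz
    rcases hE _ hz with h | h
    · exact matching_uniq hM h (by simp) heM hw
    · exact matching_uniq hN h (by simp) heN hw
  exact hab (Sym2.congr_right.mp ((key ha).trans (key hb).symm))

end WalkLemmas

end Pap14

namespace Pap14

lemma mem_spk_left (n : ℕ) (x : ZK n) : U n x ∈ spk n x := by simp [spk]
lemma mem_spk_right (n : ℕ) (x : ZK n) : W n x ∈ spk n x := by simp [spk]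

lemma cast12 (n : ℕ) : (((1:ℕ)) : ZK n) + 1 = (((2:ℕ)) : ZK n) := by
  rw [← c1 n]; exact cast_add_eq n (by omega)

lemma S1key (n : ℕ) {y : ZK n} (hy : Od n y) :
    ((y = (((1:ℕ)) : ZK n) ∨ y = (((2:ℕ)) : ZK n)) ↔
      (y + 1 = (((1:ℕ)) : ZK n) ∨ y + 1 = (((2:ℕ)) : ZK n))) := by
  have hOd1 : Od n (((1:ℕ)) : ZK n) := by rw [od_cast]
  have hOd2 : ¬ Od n (((2:ℕ)) : ZK n) := nod_c3 n
  constructor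
  · rintro (rfl | h)
    · right; exact cast12 n
    · exact absurd (h ▸ hy) hOd2
  · rintro (h | h)
    · exfalso
      have h2 : Od n (y + 1) := h ▸ hOd1
      rw [od_add_one] at h2
      exact h2 hy
    · left
      have h2 : y + 1 = (((1:ℕ)) : ZK n) + 1 := by rw [h, cast12 n]
      exact add_right_cancel h2
  
end Pap14

open Pap14 in
/-- For every positive odd integer `n`, the balanced papillon graph `P_n` does not have
the PMH-property. -/
theorem statement14 (n : ℕ) (hn : 1 ≤ n) (hodd : Odd n) : ¬ HasPMH (papillon n n) := by
  intro hPMH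
  haveI : NeZero (2*(n+n)) := ⟨by omega⟩
  obtain ⟨N, hN, x₀, c, hcHam, hSet⟩ := hPMH (MM n) (MM_perf n hn)
  have hIff : ∀ e, (e ∈ MM n ∪ N) ↔ e ∈ c.edges := by
    intro e
    rw [hSet]
    rfl
  have hEdgesIn : ∀ e ∈ c.edges, e ∈ MM n ∪ N := fun e he => (hIff e).mpr he
  -- M and N are disjoint
  have hdisj : ∀ e ∈ MM n, e ∉ N := by
    rintro e ⟨y, hy, he⟩ heN
    rcases he with rfl | rfl
    · exact not_mem_both (MM_perf n hn) hN hcHam hEdgesIn ⟨y, hy, Or.inl rfl⟩ heN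
        (w := U n y) (by simp [opair])
    · exact not_mem_both (MM_perf n hn) hN hcHam hEdgesIn ⟨y, hy, Or.inr rfl⟩ heN
        (w := W n y) (by simp [ipair])
  have hNpap : ∀ e ∈ N, e ∈ papillonEdges n n := by
    intro e he
    have h2 := hN.1 he
    rw [papillon, edgeSet_fromEdgeSet] at h2
    exact h2.1
  -- propagation of spokes along σ
  have step_sg : ∀ x, spk n x ∈ N → spk n (sg n x) ∈ N := by
    intro x hx
    obtain ⟨e, ⟨heN, hve⟩, _⟩ := hN.2 (W n (sg n x))
    rcases at_inner n hn (hNpap e heN) hve with hsp | ⟨y, hy, rfl, hxy⟩ | ⟨y, rfl, hxy⟩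
    · exact hsp ▸ heN
    · exact absurd heN (hdisj _ ⟨y, hy, Or.inr rfl⟩)
    · exfalso
      have hWx : W n x ∈ iskip n y := by
        rcases hxy with h | h
        · rw [← h]
          simp [iskip, sg_invol n hn]
        · have hxey : x = y := by
            have h2 := congrArg (sg n) h
            rwa [sg_invol n hn, sg_invol n hn] at h2
          rw [hxey]
          simp [iskip]
      have hcontra := matching_uniq hN heN hWx hx (mem_spk_right n x)
      rw [iskip, spk] at hcontra
      rw [Sym2.eq_iff] at hcontra
      simp [U, W, Prod.ext_iff] at hcontra
  -- propagation of spokes along β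
  have step_bt : ∀ x, spk n x ∈ N → spk n (bt n x) ∈ N := by
    intro x hx
    obtain ⟨e, ⟨heN, hve⟩, _⟩ := hN.2 (U n (bt n x))
    rcases at_outer n hn (hNpap e heN) hve with hsp | ⟨y, rfl, hxy⟩
    · exact hsp ▸ heN
    · exfalso
      have key : (U n x ∈ opair n y) ∨ Od n y := by
        by_cases hOd : Od n x
        · have hbt := bt_eval_odd n hOd
          rcases hxy with h | h
          · left
            rw [← h, hbt]
            have : x - 1 + 1 = x := by ring
            simp [opair, Sym2.mem_iff, this]
          · right
            have hy : y = x - 2 := by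
              rw [hbt] at h
              linear_combination -h
            rw [hy, od_sub_two]
            exact hOd
        · have hbt := bt_eval_even n hOd
          rcases hxy with h | h
          · right
            rw [← h, hbt, od_add_one]
            exact hOd
          · left
            have hy : y = x := by
              rw [hbt] at h
              linear_combination -h
            rw [hy]
            simp [opair, Sym2.mem_iff]
      rcases key with hUx | hyOd
      · have hcontra := matching_uniq hN heN hUx hx (mem_spk_left n x)
        rw [opair, spk] at hcontra
        rw [Sym2.eq_iff] at hcontra
        simp [U, W, Prod.ext_iff] at hcontra
      · exact hdisj _ ⟨y, hyOd, Or.inl rfl⟩ heN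
  have Hs : ∀ x, (x ∈ {x : ZK n | spk n x ∈ N}) ↔ sg n x ∈ {x : ZK n | spk n x ∈ N} := by
    intro x
    constructor
    · exact step_sg x
    · intro h
      have := step_sg _ h
      rwa [sg_invol n hn] at this
  have Hb : ∀ x, (x ∈ {x : ZK n | spk n x ∈ N}) ↔ bt n x ∈ {x : ZK n | spk n x ∈ N} := by
    intro x
    constructor
    · exact step_bt x
    · intro h
      have := step_bt _ h
      rwa [bt_invol n] at this
  have hreach := reach n hn hodd {x : ZK n | spk n x ∈ N} Hs Hb
  -- the walk-closure machine
  have hwalk : ∀ (S : Set (PapVert (2*(n+n)))),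
      (∀ a b, s(a,b) ∈ MM n ∪ N → (a ∈ S ↔ b ∈ S)) →
      ∀ v : PapVert (2*(n+n)), (x₀ ∈ S ↔ v ∈ S) := by
    intro S hcl v
    have hv : v ∈ c.support := hcHam.mem_support v
    exact walk_closed S (MM n ∪ N) hcl (c.takeUntil v hv)
      (fun e he => hEdgesIn e (c.edges_takeUntil_subset hv he))
  by_cases hT : spk n (((1:ℕ)) : ZK n) ∈ N
  · -- all spokes in N : M ∪ N splits into 4-cycles
    have hall : ∀ x, spk n x ∈ N := fun x => (hreach x).mpr hT
    have hNspk : ∀ e ∈ N, ∃ z, e = spk n z := by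
      intro e heN
      induction e using Sym2.ind with
      | _ a b =>
        obtain ⟨b1, z⟩ := a
        cases b1
        · exact ⟨z, matching_uniq hN heN (by simp [U]) (hall z) (mem_spk_left n z)⟩
        · exact ⟨z, matching_uniq hN heN (by simp [W]) (hall z) (mem_spk_right n z)⟩
    set S1 : Set (PapVert (2*(n+n))) :=
      {p | p.2 = (((1:ℕ)) : ZK n) ∨ p.2 = (((2:ℕ)) : ZK n)} with hS1
    have hcl : ∀ a b, s(a,b) ∈ MM n ∪ N → (a ∈ S1 ↔ b ∈ S1) := by
      intro a b hab
      rcases hab with ⟨y, hy, hee⟩ | hN'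
      · have hkey := S1key n hy
        rcases hee with hee | hee
        · rw [opair, Sym2.eq_iff] at hee
          rcases hee with ⟨rfl, rfl⟩ | ⟨rfl, rfl⟩
          · simpa [hS1, U] using hkey
          · simpa [hS1, U] using hkey.symm
        · rw [ipair, Sym2.eq_iff] at hee
          rcases hee with ⟨rfl, rfl⟩ | ⟨rfl, rfl⟩
          · simpa [hS1, W] using hkey
          · simpa [hS1, W] using hkey.symm
      · obtain ⟨z, hz⟩ := hNspk _ hN'
        rw [spk, Sym2.eq_iff] at hz
        rcases hz with ⟨rfl, rfl⟩ | ⟨rfl, rfl⟩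
        · simp [hS1, U, W]
        · simp [hS1, U, W]
    have h1 : U n (((1:ℕ)) : ZK n) ∈ S1 := Or.inl rfl
    have h3 : U n (((3:ℕ)) : ZK n) ∉ S1 := by
      simp only [hS1, Set.mem_setOf_eq, U]
      push_neg
      constructor
      · exact (cast_ne' n (by omega) (by omega) (by omega)).symm
      · exact (cast_ne' n (by omega) (by omega) (by omega)).symm
    exact h3 ((hwalk S1 hcl (U n (((3:ℕ)) : ZK n))).mp
      ((hwalk S1 hcl (U n (((1:ℕ)) : ZK n))).mpr h1))
  · -- no spokes in N : M ∪ N never crosses between inner and outer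
    have hnone : ∀ x, spk n x ∉ N := fun x hx => hT ((hreach x).mp hx)
    have hNsame : ∀ a b : PapVert (2*(n+n)), s(a,b) ∈ N → a.1 = b.1 := by
      intro a b heN
      obtain ⟨b1, z⟩ := a
      obtain ⟨b2, w'⟩ := b
      cases b1 <;> cases b2 <;> simp
      · -- (false, z) -- (true, w') : must be a spoke
        exfalso
        rcases at_outer n hn (hNpap _ heN) (show U n z ∈ s((false, z), (true, w')) by simp [U])
          with hsp | ⟨y, hee, _⟩
        · exact hnone z (hsp ▸ heN)
        · rw [opair, Sym2.eq_iff] at hee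
          simp [U, Prod.ext_iff] at hee
      · -- (true, z) -- (false, w') : must be a spoke
        exfalso
        rcases at_outer n hn (hNpap _ heN) (show U n w' ∈ s((true, z), (false, w')) by simp [U])
          with hsp | ⟨y, hee, _⟩
        · exact hnone w' (hsp ▸ heN)
        · rw [opair, Sym2.eq_iff] at hee
          simp [U, Prod.ext_iff] at hee
    set S2 : Set (PapVert (2*(n+n))) := {p | p.1 = false} with hS2
    have hcl : ∀ a b, s(a,b) ∈ MM n ∪ N → (a ∈ S2 ↔ b ∈ S2) := by
      intro a b hab
      rcases hab with ⟨y, hy, hee⟩ | hN'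
      · rcases hee with hee | hee
        · rw [opair, Sym2.eq_iff] at hee
          rcases hee with ⟨rfl, rfl⟩ | ⟨rfl, rfl⟩ <;> simp [hS2, U]
        · rw [ipair, Sym2.eq_iff] at hee
          rcases hee with ⟨rfl, rfl⟩ | ⟨rfl, rfl⟩ <;> simp [hS2, W]
      · have := hNsame a b hN'
        simp only [hS2, Set.mem_setOf_eq]
        rw [this]
    have h1 : U n (((1:ℕ)) : ZK n) ∈ S2 := rfl
    have h2 : W n (((1:ℕ)) : ZK n) ∉ S2 := by simp [hS2, W]
    exact h2 ((hwalk S2 hcl (W n (((1:ℕ)) : ZK n))).mp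
      ((hwalk S2 hcl (U n (((1:ℕ)) : ZK n))).mpr h1))
end

section
/- Let r and ℓ be positive integers at least one of which is odd. Then the set M = ⋃_{i=1}^{r+ℓ} {u_{2i−1}u_{2i}, v_{2i−1}v_{2i}} is a perfect matching of the papillon graph P_{r,ℓ}, and there is no Hamiltonian cycle of P_{r,ℓ} whose edge set contains M; equivalently, there is no perfect matching N of P_{r,ℓ} such that M ∪ N is the edge set of a Hamiltonian cycle of P_{r,ℓ}. -/
open SimpleGraph


section Tools

variable {V : Type*} {G : SimpleGraph V}

private lemma pap_countP_edges_le [DecidableEq V] (v : V) :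
    ∀ {x y : V} (p : G.Walk x y),
      p.edges.countP (fun e => v ∈ e) + (if v = x then 1 else 0) + (if v = y then 1 else 0)
        ≤ 2 * p.support.count v := by
  intro x y p
  induction p with
  | @nil u =>
    simp only [Walk.edges_nil, List.countP_nil, Walk.support_nil, List.count_cons,
      List.count_nil]
    by_cases h : v = u <;> simp [h]
  | @cons a b y h q ih =>
    simp only [Walk.edges_cons, List.countP_cons, Walk.support_cons, List.count_cons]
    have hab : a ≠ b := h.ne
    by_cases h1 : v = a <;> by_cases h2 : v = b <;> by_cases h3 : v = y <;>
      simp_all [Sym2.mem_iff, beq_iff_eq] <;> omega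

private lemma pap_exists_edge_of_mem_support (v : V) :
    ∀ {x y : V} (p : G.Walk x y), v ∈ p.support → v = x ∨ ∃ e ∈ p.edges, v ∈ e := by
  intro x y p
  induction p with
  | nil => intro hv; simp at hv; exact Or.inl hv
  | @cons a b y h q ih =>
    intro hv
    rw [Walk.support_cons, List.mem_cons] at hv
    rcases hv with hv | hv
    · exact Or.inl hv
    · rcases ih hv with rfl | ⟨e, he, hve⟩
      · exact Or.inr ⟨s(a, v), by simp, by simp⟩
      · exact Or.inr ⟨e, by simp [he], hve⟩

private lemma pap_cycle_two_edges [DecidableEq V] {x : V} {c : G.Walk x x}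
    (hc : c.IsCycle) {v : V} (hv : v ∈ c.support) :
    ∃ e₁ e₂, e₁ ≠ e₂ ∧ e₁ ∈ c.edges ∧ e₂ ∈ c.edges ∧ v ∈ e₁ ∧ v ∈ e₂ ∧
      ∀ e ∈ c.edges, v ∈ e → e = e₁ ∨ e = e₂ := by
  classical
  have heven : Even (c.edges.countP (fun e => v ∈ e)) := by
    exact (hc.isTrail.even_countP_edges_iff v).2 (fun h => absurd rfl h)
  have hpos : 0 < c.edges.countP (fun e => v ∈ e) := by
    rcases pap_exists_edge_of_mem_support v c hv with rfl | ⟨e, he, hve⟩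
    · -- v is the base point; first edge contains it
      cases c with
      | nil => exact absurd hc (Walk.IsCycle.not_of_nil)
      | @cons _ b _ h q =>
        rw [List.countP_pos_iff]
        exact ⟨s(v, b), by simp, by simp⟩
    · rw [List.countP_pos_iff]
      exact ⟨e, he, by simp [hve]⟩
  have hle : c.edges.countP (fun e => v ∈ e) ≤ 2 := by
    have hb := pap_countP_edges_le (G := G) v c
    have htail : c.support.tail.count v ≤ 1 := List.nodup_iff_count_le_one.1 hc.support_nodup v
    have hsupp : c.support = x :: c.support.tail := Walk.support_eq_cons c
    have hcnt : c.support.count v = c.support.tail.count v + (if v = x then 1 else 0) := by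
      conv_lhs => rw [hsupp]
      rw [List.count_cons]
      by_cases hvx : v = x
      · subst hvx; simp
      · simp only [beq_iff_eq]
        rw [if_neg (fun h => hvx h.symm), if_neg hvx]
    rw [hcnt] at hb
    by_cases hvx : v = x
    · subst hvx; simp at hb; omega
    · simp [hvx] at hb; omega
  have h2 : c.edges.countP (fun e => v ∈ e) = 2 := by
    obtain ⟨k, hk⟩ := heven; omega
  set L := c.edges.filter (fun e => v ∈ e) with hL
  have hlen : L.length = 2 := by
    rw [hL, ← List.countP_eq_length_filter]; exact h2
  have hnodupL : L.Nodup := (hc.isTrail.edges_nodup).filter _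
  obtain ⟨e₁, e₂, hLeq⟩ := List.length_eq_two.1 hlen
  have hne : e₁ ≠ e₂ := by
    rw [hLeq] at hnodupL; simp at hnodupL; exact hnodupL
  have hmemL : ∀ e, e ∈ L ↔ (e ∈ c.edges ∧ v ∈ e) := by
    intro e; rw [hL, List.mem_filter]; simp
  have h1 : e₁ ∈ c.edges ∧ v ∈ e₁ := (hmemL e₁).1 (by rw [hLeq]; simp)
  have h2' : e₂ ∈ c.edges ∧ v ∈ e₂ := (hmemL e₂).1 (by rw [hLeq]; simp)
  refine ⟨e₁, e₂, hne, h1.1, h2'.1, h1.2, h2'.2, ?_⟩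
  intro e he hve
  have : e ∈ L := (hmemL e).2 ⟨he, hve⟩
  rw [hLeq] at this; simpa using this

private lemma pap_xor_helper [DecidableEq V] {x w : V} {c : G.Walk x x}
    (hc : c.IsCycle) (hw : w ∈ c.support) (f g h : Sym2 V)
    (hwf : w ∈ f) (hwg : w ∈ g) (hwh : w ∈ h)
    (hfg : f ≠ g) (hfh : f ≠ h) (hgh : g ≠ h)
    (hdec : ∀ e ∈ c.edges, w ∈ e → e = f ∨ e = g ∨ e = h)
    (hf : f ∈ c.edges) : (g ∈ c.edges ↔ h ∉ c.edges) := by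
  obtain ⟨e₁, e₂, hne, he₁, he₂, hwe₁, hwe₂, hcov⟩ := pap_cycle_two_edges hc hw
  have hfmem : f = e₁ ∨ f = e₂ := hcov f hf hwf
  constructor
  · intro hg hh
    have hgmem := hcov g hg hwg
    have hhmem := hcov h hh hwh
    rcases hfmem with rfl | rfl <;> rcases hgmem with rfl | rfl <;>
      rcases hhmem with rfl | rfl <;> simp_all
  · intro hh
    by_contra hg
    have hd1 := hdec e₁ he₁ hwe₁
    have hd2 := hdec e₂ he₂ hwe₂
    rcases hd1 with rfl | rfl | rfl <;> rcases hd2 with rfl | rfl | rfl <;> simp_all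

private lemma pap_support_closed {x y : V} (p : G.Walk x y) (P : V → Prop)
    (hP : ∀ a b, s(a, b) ∈ p.edges → P a → P b) (hx : P x) :
    ∀ v ∈ p.support, P v := by
  induction p with
  | nil => intro v hv; simp at hv; rwa [hv]
  | @cons a b y h q ih =>
    intro v hv
    rw [Walk.support_cons, List.mem_cons] at hv
    rcases hv with rfl | hv
    · exact hx
    · exact ih (fun a' b' he => hP a' b' (by simp [he])) (hP a b (by simp) hx) v hv

end Tools

section Chain

private lemma pap_chain2 {m s : ℕ} (x : ℕ → Prop)
    (hC1 : ∀ j, j + 2 ≤ m → j + 1 ≠ s → (x j ↔ x (j + 2))) :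
    ∀ (k a : ℕ), a + 2 * k ≤ m → (∀ t, t < k → a + 2 * t + 1 ≠ s) → (x a ↔ x (a + 2 * k)) := by
  intro k
  induction k with
  | zero => intro a _ _; simp
  | succ n ih =>
    intro a ha hs
    have h1 : x a ↔ x (a + 2) := hC1 a (by omega) (by have := hs 0 (by omega); omega)
    have h2 : x (a + 2) ↔ x (a + 2 + 2 * n) := by
      refine ih (a + 2) (by omega) (fun t ht => ?_)
      have := hs (t + 1) (by omega); omega
    have h3 : a + 2 + 2 * n = a + 2 * (n + 1) := by ring
    rw [h1, h2, h3]

private lemma pap_allEq {m s : ℕ} (hs1 : 1 ≤ s) (hsm : s < m)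
    (hpar : m % 2 = 1 ∨ s % 2 = 1) (x : ℕ → Prop)
    (hper : ∀ i, x (i + m) ↔ x i)
    (hC1 : ∀ j, j + 2 ≤ m → j + 1 ≠ s → (x j ↔ x (j + 2)))
    (hC2 : x 1 ↔ x (s + 1)) : ∀ i, x i ↔ x 0 := by
  have hm1 : 1 ≤ m := by omega
  -- reduction mod m
  have hred : ∀ i, x i ↔ x (i % m) := by
    intro i
    induction i using Nat.strong_induction_on with
    | _ i ih =>
      by_cases h : i < m
      · rw [Nat.mod_eq_of_lt h]
      · have h1 : i - m + m = i := by omega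
        have h2 : x (i - m + m) ↔ x (i - m) := hper (i - m)
        rw [h1] at h2
        have h3 := ih (i - m) (by omega)
        rw [Nat.mod_eq_sub_mod (by omega : m ≤ i)]
        exact h2.trans h3
  have hchain : ∀ a b, a ≤ b → b ≤ m → (b - a) % 2 = 0 →
      (∀ t, a < t → t < b → (t - a) % 2 = 1 → t ≠ s) → (x a ↔ x b) := by
    intro a b hab hbm hpar2 hside
    have hk : a + 2 * ((b - a) / 2) = b := by omega
    have := pap_chain2 x hC1 ((b - a) / 2) a (by omega) (fun t ht => by
      have := hside (a + 2 * t + 1) (by omega) (by omega) (by omega)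
      exact this)
    rwa [hk] at this
  have hmper : x m ↔ x 0 := by have := hper 0; simpa using this
  by_cases hs : s % 2 = 1
  · -- s odd
    have hO : ∀ j, j % 2 = 1 → j ≤ m → (x j ↔ x 1) := by
      intro j h1 h2
      exact (hchain 1 j (by omega) h2 (by omega) (by intro t ht1 ht2 ht3; omega)).symm
    have hElow : ∀ j, j % 2 = 0 → j < s → (x j ↔ x 0) :=
      fun j h1 h2 => (hchain 0 j (by omega) (by omega) (by omega)
        (by intro t ht1 ht2 ht3; omega)).symm
    have hEhigh : ∀ j, j % 2 = 0 → s < j → j ≤ m → (x j ↔ x (s + 1)) := by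
      intro j h1 h2 h3
      exact (hchain (s + 1) j (by omega) h3 (by omega)
        (by intro t ht1 ht2 ht3; omega)).symm
    have h10 : x 1 ↔ x 0 := by
      by_cases hm : m % 2 = 0
      · exact hC2.trans ((hEhigh m hm (by omega) (le_refl m)).symm.trans hmper)
      · exact (hO m (by omega) (le_refl m)).symm.trans hmper
    intro i
    rw [hred i]
    set j := i % m with hj
    have hjm : j < m := Nat.mod_lt _ (by omega)
    by_cases hjp : j % 2 = 1
    · exact (hO j hjp (by omega)).trans h10
    · by_cases hjs : j < s
      · exact hElow j (by omega) hjs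
      · have : s < j := by omega
        exact ((hEhigh j (by omega) this (by omega)).trans hC2.symm).trans h10
  · -- s even, m odd
    have hm : m % 2 = 1 := by rcases hpar with h | h; exact h; omega
    have hE : ∀ j, j % 2 = 0 → j ≤ m → (x j ↔ x 0) :=
      fun j h1 h2 => (hchain 0 j (by omega) h2 (by omega)
        (by intro t ht1 ht2 ht3; omega)).symm
    have hOlow : ∀ j, j % 2 = 1 → j < s → (x j ↔ x 1) :=
      fun j h1 h2 => (hchain 1 j (by omega) (by omega) (by omega)
        (by intro t ht1 ht2 ht3; omega)).symm
    have hOhigh : ∀ j, j % 2 = 1 → s < j → j ≤ m → (x j ↔ x (s + 1)) :=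
      fun j h1 h2 h3 => (hchain (s + 1) j (by omega) h3 (by omega)
        (by intro t ht1 ht2 ht3; omega)).symm
    have h10 : x 1 ↔ x 0 := by
      have h1 := hOhigh m hm (by omega) (le_refl m)
      exact hC2.trans (h1.symm.trans hmper)
    intro i
    rw [hred i]
    set j := i % m with hj
    have hjm : j < m := Nat.mod_lt _ (by omega)
    by_cases hjp : j % 2 = 1
    · by_cases hjs : j < s
      · exact (hOlow j hjp hjs).trans h10
      · have : s < j := by omega
        exact ((hOhigh j hjp this (by omega)).trans hC2.symm).trans h10
    · exact hE j (by omega) (by omega)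

end Chain

section PapHelpers

variable {r l : ℕ}

private lemma pap_cast_eq {a b : ℕ} :
    ((a : ZMod (2*(r+l))) = (b : ZMod (2*(r+l)))) ↔ a % (2*(r+l)) = b % (2*(r+l)) :=
  ZMod.natCast_eq_natCast_iff' a b _

private lemma pap_par {a b : ℕ} (h : (a : ZMod (2*(r+l))) = (b : ZMod (2*(r+l)))) :
    a % 2 = b % 2 := by
  have h2 : a ≡ b [MOD 2*(r+l)] := (ZMod.natCast_eq_natCast_iff _ _ _).1 h
  exact h2.of_dvd (dvd_mul_right 2 (r+l))

private lemma pap_inj {a b : ℕ} (ha1 : 1 ≤ a) (ha : a ≤ 2*(r+l)) (hb1 : 1 ≤ b)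
    (hb : b ≤ 2*(r+l)) (h : (a : ZMod (2*(r+l))) = b) : a = b := by
  have hm := pap_cast_eq.1 h
  by_cases hA : a < 2*(r+l) <;> by_cases hB : b < 2*(r+l)
  · rwa [Nat.mod_eq_of_lt hA, Nat.mod_eq_of_lt hB] at hm
  · have hbe : b = 2*(r+l) := by omega
    rw [Nat.mod_eq_of_lt hA, hbe, Nat.mod_self] at hm; omega
  · have hae : a = 2*(r+l) := by omega
    rw [Nat.mod_eq_of_lt hB, hae, Nat.mod_self] at hm; omega
  · omega

private lemma pap_cast_add_one {a b : ℕ} (h : b = a + 1) :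
    ((b : ℕ) : ZMod (2*(r+l))) = (a : ZMod (2*(r+l))) + 1 := by subst h; push_cast; ring

private lemma pap_pred_eq {a b a' b' : ℕ} (ha : a' = a + 1) (hb : b' = b + 1)
    (h : ((a' : ℕ) : ZMod (2*(r+l))) = (b' : ℕ)) : (a : ZMod (2*(r+l))) = b := by
  rw [pap_cast_add_one ha, pap_cast_add_one hb] at h
  exact add_right_cancel h

private lemma pap_pu_def (a : ℕ) :
    pu (2*(r+l)) a = ((false, (a : ZMod (2*(r+l)))) : PapVert (2*(r+l))) := rfl

private lemma pap_pv_def (a : ℕ) :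
    pv (2*(r+l)) a = ((true, (a : ZMod (2*(r+l)))) : PapVert (2*(r+l))) := rfl

private lemma pap_decodeU (hr : 1 ≤ r) (hl : 1 ≤ l) {e : Sym2 (PapVert (2*(r+l)))}
    (he : e ∈ papillonEdges r l) {j : ZMod (2*(r+l))}
    (hj : ((false, j) : PapVert (2*(r+l))) ∈ e) :
    e = s(((false, j-1) : PapVert (2*(r+l))), (false, j))
      ∨ e = s(((false, j) : PapVert (2*(r+l))), (false, j+1))
      ∨ e = s(((false, j) : PapVert (2*(r+l))), (true, j)) := by
  simp only [papillonEdges, Set.mem_setOf_eq] at he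
  rcases he with ⟨i, hi1, hi2, rfl⟩ | rfl | ⟨i, hi1, hi2, rfl⟩ | ⟨i, hi1, hi2, rfl⟩ |
    ⟨i, hi1, hi2, hi3, rfl⟩ | rfl | rfl
  · -- outer edges
    rw [Sym2.mem_iff] at hj
    rcases hj with hj | hj
    · have h : j = ((i : ℕ) : ZMod (2*(r+l))) := congrArg Prod.snd hj
      refine Or.inr (Or.inl ?_)
      rw [pap_pu_def i, pap_pu_def (i+1), pap_cast_add_one (rfl : i + 1 = i + 1), ← h]
    · have h : j = ((i + 1 : ℕ) : ZMod (2*(r+l))) := congrArg Prod.snd hj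
      refine Or.inl ?_
      have h1 : ((i : ℕ) : ZMod (2*(r+l))) = j - 1 := by
        rw [h, pap_cast_add_one (rfl : i + 1 = i + 1)]; ring
      rw [pap_pu_def i, pap_pu_def (i+1), h1, ← h]
  · -- wrap edge
    rw [Sym2.mem_iff] at hj
    have hN : ((2*(r+l) : ℕ) : ZMod (2*(r+l))) = 0 := ZMod.natCast_self _
    rcases hj with hj | hj
    · have h : j = ((2*(r+l) : ℕ) : ZMod (2*(r+l))) := congrArg Prod.snd hj
      refine Or.inr (Or.inl ?_)
      have h1 : ((1 : ℕ) : ZMod (2*(r+l))) = j + 1 := by rw [h, hN]; norm_num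
      rw [pap_pu_def (2*(r+l)), pap_pu_def 1, h1, ← h]
    · have h : j = ((1 : ℕ) : ZMod (2*(r+l))) := congrArg Prod.snd hj
      refine Or.inl ?_
      have h1 : ((2*(r+l) : ℕ) : ZMod (2*(r+l))) = j - 1 := by rw [hN, h]; norm_num
      rw [pap_pu_def (2*(r+l)), pap_pu_def 1, h1, ← h]
  · -- spokes
    rw [Sym2.mem_iff] at hj
    rcases hj with hj | hj
    · have h : j = ((i : ℕ) : ZMod (2*(r+l))) := congrArg Prod.snd hj
      refine Or.inr (Or.inr ?_)
      rw [pap_pu_def i, pap_pv_def i, ← h]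
    · exact absurd (congrArg Prod.fst hj) (by simp [pv])
  all_goals {
    rw [Sym2.mem_iff] at hj
    rcases hj with hj | hj <;> exact absurd (congrArg Prod.fst hj) (by simp [pv]) }

private lemma pap_cast_two_ne (hr : 1 ≤ r) (hl : 1 ≤ l) {a b : ℕ} (hab : b = a + 2)
    (h : (a : ZMod (2*(r+l))) = b) : False := by
  have h2 : ((b:ℕ) : ZMod (2*(r+l))) = (a : ZMod (2*(r+l))) + 2 := by
    subst hab; push_cast; ring
  rw [h2] at h
  have h4 : ((2:ℕ) : ZMod (2*(r+l))) = ((0:ℕ) : ZMod (2*(r+l))) := by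
    push_cast
    linear_combination h.symm
  have h5 := pap_cast_eq.1 h4
  rw [Nat.mod_eq_of_lt (by omega), Nat.zero_mod] at h5
  omega

private def pap_chordOdd (r l : ℕ) (i : ℕ) : Sym2 (PapVert (2*(r+l))) :=
  if i = min r l ∨ i = r + l then
    s(pv (2*(r+l)) (2*min r l - 1), pv (2*(r+l)) (2*(r+l) - 1))
  else s(pv (2*(r+l)) (2*i-1), pv (2*(r+l)) (2*i+2))

private def pap_chordEven (r l : ℕ) (i : ℕ) : Sym2 (PapVert (2*(r+l))) :=
  if i = 1 ∨ i = min r l + 1 then s(pv (2*(r+l)) 2, pv (2*(r+l)) (2*min r l + 2))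
  else s(pv (2*(r+l)) (2*i-3), pv (2*(r+l)) (2*i))

private lemma pap_mem_chordOdd {i : ℕ} (hi1 : 1 ≤ i) (hi2 : i ≤ r + l) :
    pv (2*(r+l)) (2*i-1) ∈ pap_chordOdd r l i := by
  rw [pap_chordOdd]
  split_ifs with h
  · rcases h with rfl | rfl
    · rw [Sym2.mem_iff]; left; rfl
    · rw [Sym2.mem_iff]; right; rfl
  · rw [Sym2.mem_iff]; left; rfl

private lemma pap_mem_chordEven {i : ℕ} (hi1 : 1 ≤ i) (hi2 : i ≤ r + l) :
    pv (2*(r+l)) (2*i) ∈ pap_chordEven r l i := by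
  rw [pap_chordEven]
  split_ifs with h
  · rcases h with rfl | rfl
    · rw [Sym2.mem_iff]; left; norm_num
    · rw [Sym2.mem_iff]; right
      have : 2 * (min r l + 1) = 2 * min r l + 2 := by omega
      rw [this]
  · rw [Sym2.mem_iff]; right; rfl

private lemma pap_decodeVodd (hr : 1 ≤ r) (hl : 1 ≤ l) {i : ℕ} (hi1 : 1 ≤ i) (hi2 : i ≤ r + l)
    {e : Sym2 (PapVert (2*(r+l)))} (he : e ∈ papillonEdges r l)
    (hj : pv (2*(r+l)) (2*i-1) ∈ e) :
    e = s(pu (2*(r+l)) (2*i-1), pv (2*(r+l)) (2*i-1))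
      ∨ e = s(pv (2*(r+l)) (2*i-1), pv (2*(r+l)) (2*i))
      ∨ e = pap_chordOdd r l i := by
  have hmin : 1 ≤ min r l := by omega
  simp only [papillonEdges, Set.mem_setOf_eq] at he
  rcases he with ⟨i', hi1', hi2', rfl⟩ | rfl | ⟨i', hi1', hi2', rfl⟩ | ⟨i', hi1', hi2', rfl⟩ |
    ⟨i', hi1', hi2', hi3', rfl⟩ | rfl | rfl
  · rw [Sym2.mem_iff] at hj
    rcases hj with hj | hj <;> exact absurd (congrArg Prod.fst hj) (by simp [pu, pv])
  · rw [Sym2.mem_iff] at hj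
    rcases hj with hj | hj <;> exact absurd (congrArg Prod.fst hj) (by simp [pu, pv])
  · -- spokes
    rw [Sym2.mem_iff] at hj
    rcases hj with hj | hj
    · exact absurd (congrArg Prod.fst hj) (by simp [pu, pv])
    · have h : ((2*i-1 : ℕ) : ZMod (2*(r+l))) = ((i' : ℕ) : ZMod (2*(r+l))) :=
        congrArg Prod.snd hj
      refine Or.inl ?_
      rw [pap_pu_def i', pap_pv_def i', pap_pu_def (2*i-1), pap_pv_def (2*i-1), ← h]
  · -- inner matching edges
    rw [Sym2.mem_iff] at hj
    rcases hj with hj | hj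
    · have h : ((2*i-1 : ℕ) : ZMod (2*(r+l))) = ((2*i'-1 : ℕ) : ZMod (2*(r+l))) :=
        congrArg Prod.snd hj
      have h2 : ((2*i : ℕ) : ZMod (2*(r+l))) = ((2*i' : ℕ) : ZMod (2*(r+l))) := by
        rw [pap_cast_add_one (show 2*i = 2*i-1+1 by omega),
          pap_cast_add_one (show 2*i' = 2*i'-1+1 by omega), h]
      refine Or.inr (Or.inl ?_)
      rw [pap_pv_def (2*i'-1), pap_pv_def (2*i'), pap_pv_def (2*i-1), pap_pv_def (2*i),
        ← h, ← h2]
    · have h : ((2*i-1 : ℕ) : ZMod (2*(r+l))) = ((2*i' : ℕ) : ZMod (2*(r+l))) :=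
        congrArg Prod.snd hj
      have := pap_par h; omega
  · -- ordinary chords
    rw [Sym2.mem_iff] at hj
    rcases hj with hj | hj
    · have h : ((2*i-1 : ℕ) : ZMod (2*(r+l))) = ((2*i'-1 : ℕ) : ZMod (2*(r+l))) :=
        congrArg Prod.snd hj
      have hii : i = i' := by
        have := pap_inj (by omega) (by omega) (by omega) (by omega) h
        omega
      subst hii
      refine Or.inr (Or.inr ?_)
      rw [pap_chordOdd, if_neg (by omega)]
    · have h : ((2*i-1 : ℕ) : ZMod (2*(r+l))) = ((2*i'+2 : ℕ) : ZMod (2*(r+l))) :=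
        congrArg Prod.snd hj
      have := pap_par h; omega
  · -- twist chord 1 (even ends)
    rw [Sym2.mem_iff] at hj
    rcases hj with hj | hj
    · have h : ((2*i-1 : ℕ) : ZMod (2*(r+l))) = ((2 : ℕ) : ZMod (2*(r+l))) :=
        congrArg Prod.snd hj
      have := pap_par h; omega
    · have h : ((2*i-1 : ℕ) : ZMod (2*(r+l))) = ((2*min r l + 2 : ℕ) : ZMod (2*(r+l))) :=
        congrArg Prod.snd hj
      have := pap_par h; omega
  · -- twist chord 2 (odd ends)
    rw [Sym2.mem_iff] at hj
    rcases hj with hj | hj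
    · have h : ((2*i-1 : ℕ) : ZMod (2*(r+l))) = ((2*min r l - 1 : ℕ) : ZMod (2*(r+l))) :=
        congrArg Prod.snd hj
      have hii : i = min r l := by
        have := pap_inj (by omega) (by omega) (by omega) (by omega) h
        omega
      refine Or.inr (Or.inr ?_)
      rw [pap_chordOdd, if_pos (Or.inl hii)]
    · have h : ((2*i-1 : ℕ) : ZMod (2*(r+l))) = ((2*(r+l) - 1 : ℕ) : ZMod (2*(r+l))) :=
        congrArg Prod.snd hj
      have hii : i = r + l := by
        have := pap_inj (by omega) (by omega) (by omega) (by omega) h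
        omega
      refine Or.inr (Or.inr ?_)
      rw [pap_chordOdd, if_pos (Or.inr hii)]

private lemma pap_decodeVeven (hr : 1 ≤ r) (hl : 1 ≤ l) {i : ℕ} (hi1 : 1 ≤ i) (hi2 : i ≤ r + l)
    {e : Sym2 (PapVert (2*(r+l)))} (he : e ∈ papillonEdges r l)
    (hj : pv (2*(r+l)) (2*i) ∈ e) :
    e = s(pu (2*(r+l)) (2*i), pv (2*(r+l)) (2*i))
      ∨ e = s(pv (2*(r+l)) (2*i-1), pv (2*(r+l)) (2*i))
      ∨ e = pap_chordEven r l i := by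
  have hmin : 1 ≤ min r l := by omega
  have hminle : min r l ≤ r + l - 1 := by omega
  simp only [papillonEdges, Set.mem_setOf_eq] at he
  rcases he with ⟨i', hi1', hi2', rfl⟩ | rfl | ⟨i', hi1', hi2', rfl⟩ | ⟨i', hi1', hi2', rfl⟩ |
    ⟨i', hi1', hi2', hi3', rfl⟩ | rfl | rfl
  · rw [Sym2.mem_iff] at hj
    rcases hj with hj | hj <;> exact absurd (congrArg Prod.fst hj) (by simp [pu, pv])
  · rw [Sym2.mem_iff] at hj
    rcases hj with hj | hj <;> exact absurd (congrArg Prod.fst hj) (by simp [pu, pv])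
  · -- spokes
    rw [Sym2.mem_iff] at hj
    rcases hj with hj | hj
    · exact absurd (congrArg Prod.fst hj) (by simp [pu, pv])
    · have h : ((2*i : ℕ) : ZMod (2*(r+l))) = ((i' : ℕ) : ZMod (2*(r+l))) :=
        congrArg Prod.snd hj
      refine Or.inl ?_
      rw [pap_pu_def i', pap_pv_def i', pap_pu_def (2*i), pap_pv_def (2*i), ← h]
  · -- inner matching edges
    rw [Sym2.mem_iff] at hj
    rcases hj with hj | hj
    · have h : ((2*i : ℕ) : ZMod (2*(r+l))) = ((2*i'-1 : ℕ) : ZMod (2*(r+l))) :=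
        congrArg Prod.snd hj
      have := pap_par h; omega
    · have h : ((2*i : ℕ) : ZMod (2*(r+l))) = ((2*i' : ℕ) : ZMod (2*(r+l))) :=
        congrArg Prod.snd hj
      have h2 : ((2*i-1 : ℕ) : ZMod (2*(r+l))) = ((2*i'-1 : ℕ) : ZMod (2*(r+l))) := by
        have := pap_pred_eq (show 2*i = 2*i-1+1 by omega) (show 2*i' = 2*i'-1+1 by omega) h
        exact this
      refine Or.inr (Or.inl ?_)
      rw [pap_pv_def (2*i'-1), pap_pv_def (2*i'), pap_pv_def (2*i-1), pap_pv_def (2*i),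
        ← h, ← h2]
  · -- ordinary chords
    rw [Sym2.mem_iff] at hj
    rcases hj with hj | hj
    · have h : ((2*i : ℕ) : ZMod (2*(r+l))) = ((2*i'-1 : ℕ) : ZMod (2*(r+l))) :=
        congrArg Prod.snd hj
      have := pap_par h; omega
    · have h : ((2*i : ℕ) : ZMod (2*(r+l))) = ((2*i'+2 : ℕ) : ZMod (2*(r+l))) :=
        congrArg Prod.snd hj
      have hii : i = i' + 1 := by
        have := pap_inj (by omega) (by omega) (by omega) (by omega) h
        omega
      refine Or.inr (Or.inr ?_)
      rw [pap_chordEven, if_neg (by omega)]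
      have e1 : 2*i-3 = 2*i'-1 := by omega
      have e2 : 2*i = 2*i'+2 := by omega
      rw [e1, e2]
  · -- twist chord 1 (even ends)
    rw [Sym2.mem_iff] at hj
    rcases hj with hj | hj
    · have h : ((2*i : ℕ) : ZMod (2*(r+l))) = ((2 : ℕ) : ZMod (2*(r+l))) :=
        congrArg Prod.snd hj
      have hii : i = 1 := by
        have := pap_inj (by omega) (by omega) (by omega) (by omega) h
        omega
      refine Or.inr (Or.inr ?_)
      rw [pap_chordEven, if_pos (Or.inl hii)]
    · have h : ((2*i : ℕ) : ZMod (2*(r+l))) = ((2*min r l + 2 : ℕ) : ZMod (2*(r+l))) :=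
        congrArg Prod.snd hj
      have hii : i = min r l + 1 := by
        have := pap_inj (by omega) (by omega) (by omega) (by omega) h
        omega
      refine Or.inr (Or.inr ?_)
      rw [pap_chordEven, if_pos (Or.inr hii)]
  · -- twist chord 2 (odd ends)
    rw [Sym2.mem_iff] at hj
    rcases hj with hj | hj
    · have h : ((2*i : ℕ) : ZMod (2*(r+l))) = ((2*min r l - 1 : ℕ) : ZMod (2*(r+l))) :=
        congrArg Prod.snd hj
      have := pap_par h; omega
    · have h : ((2*i : ℕ) : ZMod (2*(r+l))) = ((2*(r+l) - 1 : ℕ) : ZMod (2*(r+l))) :=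
        congrArg Prod.snd hj
      have := pap_par h; omega

private def pap_xE (r l i : ℕ) : Sym2 (PapVert (2*(r+l))) :=
  s(pu (2*(r+l)) (2*i), pu (2*(r+l)) (2*i+1))
private def pap_sE (r l i : ℕ) : Sym2 (PapVert (2*(r+l))) :=
  s(pu (2*(r+l)) (2*i), pv (2*(r+l)) (2*i))
private def pap_sO (r l i : ℕ) : Sym2 (PapVert (2*(r+l))) :=
  s(pu (2*(r+l)) (2*i-1), pv (2*(r+l)) (2*i-1))
private def pap_Mu (r l i : ℕ) : Sym2 (PapVert (2*(r+l))) :=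
  s(pu (2*(r+l)) (2*i-1), pu (2*(r+l)) (2*i))
private def pap_Mv (r l i : ℕ) : Sym2 (PapVert (2*(r+l))) :=
  s(pv (2*(r+l)) (2*i-1), pv (2*(r+l)) (2*i))

private lemma pap_pu_ne_pv (a b : ℕ) : pu (2*(r+l)) a ≠ pv (2*(r+l)) b := by simp [pu, pv]

private lemma pap_edges_mem {x : PapVert (2*(r+l))} {c : (papillon r l).Walk x x}
    {e : Sym2 (PapVert (2*(r+l)))} (he : e ∈ c.edges) : e ∈ papillonEdges r l := by
  have h1 := c.edges_subset_edgeSet he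
  rw [papillon, edgeSet_fromEdgeSet] at h1
  exact h1.1

section WithWalk

variable (hr : 1 ≤ r) (hl : 1 ≤ l) {x : PapVert (2*(r+l))} {c : (papillon r l).Walk x x}
  (hcyc : c.IsCycle) (hsup : ∀ v, v ∈ c.support)

include hr hl hcyc hsup

private lemma pap_A
    (hMu : ∀ i, 1 ≤ i → i ≤ r + l → pap_Mu r l i ∈ c.edges)
    {i : ℕ} (hi1 : 1 ≤ i) (hi2 : i ≤ r + l) :
    (pap_xE r l i ∈ c.edges ↔ pap_sE r l i ∉ c.edges) := by
  have hc1 : ((2*i-1:ℕ) : ZMod (2*(r+l))) = ((2*i:ℕ) : ZMod (2*(r+l))) - 1 := by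
    rw [pap_cast_add_one (show 2*i = 2*i-1+1 by omega)]; ring
  have hc2 : ((2*i+1:ℕ) : ZMod (2*(r+l))) = ((2*i:ℕ) : ZMod (2*(r+l))) + 1 :=
    pap_cast_add_one rfl
  refine pap_xor_helper hcyc (hsup (pu (2*(r+l)) (2*i)))
    (pap_Mu r l i) (pap_xE r l i) (pap_sE r l i) ?_ ?_ ?_ ?_ ?_ ?_ ?_ (hMu i hi1 hi2)
  · rw [pap_Mu, Sym2.mem_iff]; right; rfl
  · rw [pap_xE, Sym2.mem_iff]; left; rfl
  · rw [pap_sE, Sym2.mem_iff]; left; rfl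
  · -- Mu ≠ xE
    rw [pap_Mu, pap_xE]
    intro h
    rw [Sym2.eq_iff] at h
    rcases h with ⟨h1, h2⟩ | ⟨h1, h2⟩
    · have := pap_par (congrArg Prod.snd h1); omega
    · exact pap_cast_two_ne hr hl (show 2*i+1 = 2*i-1+2 by omega)
        (congrArg Prod.snd h1)
  · -- Mu ≠ sE
    rw [pap_Mu, pap_sE]
    intro h
    rw [Sym2.eq_iff] at h
    rcases h with ⟨h1, h2⟩ | ⟨h1, h2⟩
    · exact pap_pu_ne_pv _ _ h2
    · exact pap_pu_ne_pv _ _ h1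
  · -- xE ≠ sE
    rw [pap_xE, pap_sE]
    intro h
    rw [Sym2.eq_iff] at h
    rcases h with ⟨h1, h2⟩ | ⟨h1, h2⟩
    · exact pap_pu_ne_pv _ _ h2
    · exact pap_pu_ne_pv _ _ h1
  · -- decode
    intro e he hwe
    rcases pap_decodeU hr hl (pap_edges_mem he) hwe with h | h | h
    · left
      rw [pap_Mu, pap_pu_def (2*i-1), pap_pu_def (2*i), hc1]
      exact h
    · right; left
      rw [pap_xE, pap_pu_def (2*i), pap_pu_def (2*i+1), hc2]
      exact h
    · right; right
      rw [pap_sE, pap_pu_def (2*i), pap_pv_def (2*i)]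
      exact h

private lemma pap_B
    (hMu : ∀ i, 1 ≤ i → i ≤ r + l → pap_Mu r l i ∈ c.edges)
    {i : ℕ} (hi1 : 1 ≤ i) (hi2 : i ≤ r + l) :
    (s(pu (2*(r+l)) (2*i-2), pu (2*(r+l)) (2*i-1)) ∈ c.edges ↔ pap_sO r l i ∉ c.edges) := by
  have hc1 : ((2*i-2:ℕ) : ZMod (2*(r+l))) = ((2*i-1:ℕ) : ZMod (2*(r+l))) - 1 := by
    rw [pap_cast_add_one (show 2*i-1 = 2*i-2+1 by omega)]; ring
  have hc2 : ((2*i:ℕ) : ZMod (2*(r+l))) = ((2*i-1:ℕ) : ZMod (2*(r+l))) + 1 :=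
    pap_cast_add_one (by omega)
  refine pap_xor_helper hcyc (hsup (pu (2*(r+l)) (2*i-1)))
    (pap_Mu r l i) (s(pu (2*(r+l)) (2*i-2), pu (2*(r+l)) (2*i-1))) (pap_sO r l i)
    ?_ ?_ ?_ ?_ ?_ ?_ ?_ (hMu i hi1 hi2)
  · rw [pap_Mu, Sym2.mem_iff]; left; rfl
  · rw [Sym2.mem_iff]; right; rfl
  · rw [pap_sO, Sym2.mem_iff]; left; rfl
  · rw [pap_Mu]
    intro h
    rw [Sym2.eq_iff] at h
    rcases h with ⟨h1, h2⟩ | ⟨h1, h2⟩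
    · have := pap_par (congrArg Prod.snd h1); omega
    · exact pap_cast_two_ne hr hl (show 2*i = 2*i-2+2 by omega)
        (congrArg Prod.snd h2.symm)
  · rw [pap_Mu, pap_sO]
    intro h
    rw [Sym2.eq_iff] at h
    rcases h with ⟨h1, h2⟩ | ⟨h1, h2⟩
    · exact pap_pu_ne_pv _ _ h2
    · exact pap_pu_ne_pv _ _ h1
  · rw [pap_sO]
    intro h
    rw [Sym2.eq_iff] at h
    rcases h with ⟨h1, h2⟩ | ⟨h1, h2⟩
    · exact pap_pu_ne_pv _ _ h2
    · exact pap_pu_ne_pv _ _ h1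
  · intro e he hwe
    rcases pap_decodeU hr hl (pap_edges_mem he) hwe with h | h | h
    · right; left
      rw [pap_pu_def (2*i-2), pap_pu_def (2*i-1), hc1]
      exact h
    · left
      rw [pap_Mu, pap_pu_def (2*i-1), pap_pu_def (2*i), hc2]
      exact h
    · right; right
      rw [pap_sO, pap_pu_def (2*i-1), pap_pv_def (2*i-1)]
      exact h

private lemma pap_C
    (hMv : ∀ i, 1 ≤ i → i ≤ r + l → pap_Mv r l i ∈ c.edges)
    {i : ℕ} (hi1 : 1 ≤ i) (hi2 : i ≤ r + l) :
    (pap_sE r l i ∈ c.edges ↔ pap_chordEven r l i ∉ c.edges) := by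
  refine pap_xor_helper hcyc (hsup (pv (2*(r+l)) (2*i)))
    (pap_Mv r l i) (pap_sE r l i) (pap_chordEven r l i)
    ?_ ?_ ?_ ?_ ?_ ?_ ?_ (hMv i hi1 hi2)
  · rw [pap_Mv, Sym2.mem_iff]; right; rfl
  · rw [pap_sE, Sym2.mem_iff]; right; rfl
  · exact pap_mem_chordEven hi1 hi2
  · rw [pap_Mv, pap_sE]
    intro h
    rw [Sym2.eq_iff] at h
    rcases h with ⟨h1, h2⟩ | ⟨h1, h2⟩
    · exact pap_pu_ne_pv _ _ h1.symm
    · exact pap_pu_ne_pv _ _ h2.symm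
  · -- Mv ≠ chordEven
    rw [pap_Mv, pap_chordEven]
    split_ifs with hcond
    · intro h
      rw [Sym2.eq_iff] at h
      rcases h with ⟨h1, h2⟩ | ⟨h1, h2⟩
      · have := pap_par (congrArg Prod.snd h1); omega
      · have := pap_par (congrArg Prod.snd h1); omega
    · intro h
      have hi2' : 2 ≤ i := by omega
      rw [Sym2.eq_iff] at h
      rcases h with ⟨h1, h2⟩ | ⟨h1, h2⟩
      · exact pap_cast_two_ne hr hl (show 2*i-1 = 2*i-3+2 by omega)
          (congrArg Prod.snd h1.symm)
      · have := pap_par (congrArg Prod.snd h1); omega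
  · -- sE ≠ chordEven
    rw [pap_sE, pap_chordEven]
    split_ifs with hcond
    · intro h
      rw [Sym2.eq_iff] at h
      rcases h with ⟨h1, h2⟩ | ⟨h1, h2⟩
      · exact pap_pu_ne_pv _ _ h1
      · exact pap_pu_ne_pv _ _ h1
    · intro h
      rw [Sym2.eq_iff] at h
      rcases h with ⟨h1, h2⟩ | ⟨h1, h2⟩
      · exact pap_pu_ne_pv _ _ h1
      · exact pap_pu_ne_pv _ _ h1
  · intro e he hwe
    rcases pap_decodeVeven hr hl hi1 hi2 (pap_edges_mem he) hwe with h | h | h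
    · right; left; rw [pap_sE]; exact h
    · left; rw [pap_Mv]; exact h
    · right; right; exact h

private lemma pap_D
    (hMv : ∀ i, 1 ≤ i → i ≤ r + l → pap_Mv r l i ∈ c.edges)
    {i : ℕ} (hi1 : 1 ≤ i) (hi2 : i ≤ r + l) :
    (pap_sO r l i ∈ c.edges ↔ pap_chordOdd r l i ∉ c.edges) := by
  have hmin : 1 ≤ min r l := by omega
  refine pap_xor_helper hcyc (hsup (pv (2*(r+l)) (2*i-1)))
    (pap_Mv r l i) (pap_sO r l i) (pap_chordOdd r l i)
    ?_ ?_ ?_ ?_ ?_ ?_ ?_ (hMv i hi1 hi2)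
  · rw [pap_Mv, Sym2.mem_iff]; left; rfl
  · rw [pap_sO, Sym2.mem_iff]; right; rfl
  · exact pap_mem_chordOdd hi1 hi2
  · rw [pap_Mv, pap_sO]
    intro h
    rw [Sym2.eq_iff] at h
    rcases h with ⟨h1, h2⟩ | ⟨h1, h2⟩
    · exact pap_pu_ne_pv _ _ h1.symm
    · exact pap_pu_ne_pv _ _ h2.symm
  · -- Mv ≠ chordOdd
    rw [pap_Mv, pap_chordOdd]
    split_ifs with hcond
    · intro h
      rw [Sym2.eq_iff] at h
      rcases h with ⟨h1, h2⟩ | ⟨h1, h2⟩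
      · have := pap_par (congrArg Prod.snd h2); omega
      · have := pap_par (congrArg Prod.snd h2); omega
    · intro h
      rw [Sym2.eq_iff] at h
      rcases h with ⟨h1, h2⟩ | ⟨h1, h2⟩
      · exact pap_cast_two_ne hr hl rfl (congrArg Prod.snd h2)
      · have := pap_par (congrArg Prod.snd h1); omega
  · -- sO ≠ chordOdd
    rw [pap_sO, pap_chordOdd]
    split_ifs with hcond
    · intro h
      rw [Sym2.eq_iff] at h
      rcases h with ⟨h1, h2⟩ | ⟨h1, h2⟩
      · exact pap_pu_ne_pv _ _ h1
      · exact pap_pu_ne_pv _ _ h1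
    · intro h
      rw [Sym2.eq_iff] at h
      rcases h with ⟨h1, h2⟩ | ⟨h1, h2⟩
      · exact pap_pu_ne_pv _ _ h1
      · exact pap_pu_ne_pv _ _ h1
  · intro e he hwe
    rcases pap_decodeVodd hr hl hi1 hi2 (pap_edges_mem he) hwe with h | h | h
    · right; left; rw [pap_sO]; exact h
    · left; rw [pap_Mv]; exact h
    · right; right; exact h

private lemma pap_chE
    (hMu : ∀ i, 1 ≤ i → i ≤ r + l → pap_Mu r l i ∈ c.edges)
    (hMv : ∀ i, 1 ≤ i → i ≤ r + l → pap_Mv r l i ∈ c.edges)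
    {i : ℕ} (hi1 : 1 ≤ i) (hi2 : i ≤ r + l) :
    (pap_chordEven r l i ∈ c.edges ↔ pap_xE r l i ∈ c.edges) := by
  have hA := pap_A hr hl hcyc hsup hMu hi1 hi2
  have hC := pap_C hr hl hcyc hsup hMv hi1 hi2
  tauto

private lemma pap_chO
    (hMu : ∀ i, 1 ≤ i → i ≤ r + l → pap_Mu r l i ∈ c.edges)
    (hMv : ∀ i, 1 ≤ i → i ≤ r + l → pap_Mv r l i ∈ c.edges)
    {i : ℕ} (hi1 : 1 ≤ i) (hi2 : i ≤ r + l) :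
    (pap_chordOdd r l i ∈ c.edges ↔
      s(pu (2*(r+l)) (2*i-2), pu (2*(r+l)) (2*i-1)) ∈ c.edges) := by
  have hB := pap_B hr hl hcyc hsup hMu hi1 hi2
  have hD := pap_D hr hl hcyc hsup hMv hi1 hi2
  tauto

end WithWalk

private lemma pap_chord_eq (hr : 1 ≤ r) (hl : 1 ≤ l) {i : ℕ} (hi1 : 1 ≤ i)
    (hi2 : i ≤ r + l - 1) (hne : i ≠ min r l) :
    pap_chordOdd r l i = pap_chordEven r l (i+1) := by
  rw [pap_chordOdd, pap_chordEven, if_neg (by omega), if_neg (by omega)]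
  rw [show 2*(i+1)-3 = 2*i-1 by omega, show 2*(i+1) = 2*i+2 by omega]

private lemma pap_chord_eq2 :
    pap_chordEven r l 1 = pap_chordEven r l (min r l + 1) := by
  rw [pap_chordEven, pap_chordEven, if_pos (Or.inl rfl), if_pos (Or.inr rfl)]

private lemma pap_xE_shift {i : ℕ} (hi : 1 ≤ i) :
    pap_xE r l (i-1) = s(pu (2*(r+l)) (2*i-2), pu (2*(r+l)) (2*i-1)) := by
  rw [pap_xE, show 2*(i-1) = 2*i-2 by omega, show 2*i-2+1 = 2*i-1 by omega]

private lemma pap_xE_per (i : ℕ) : pap_xE r l (i + (r+l)) = pap_xE r l i := by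
  have c1 : ((2*(i+(r+l)) : ℕ) : ZMod (2*(r+l))) = ((2*i : ℕ) : ZMod (2*(r+l))) :=
    pap_cast_eq.2 (by rw [show 2*(i+(r+l)) = 2*i + 2*(r+l) by ring, Nat.add_mod_right])
  have c2 : ((2*(i+(r+l))+1 : ℕ) : ZMod (2*(r+l))) = ((2*i+1 : ℕ) : ZMod (2*(r+l))) :=
    pap_cast_eq.2 (by rw [show 2*(i+(r+l))+1 = (2*i+1) + 2*(r+l) by ring, Nat.add_mod_right])
  rw [pap_xE, pap_xE, pap_pu_def, pap_pu_def, pap_pu_def, pap_pu_def, c1, c2]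

end PapHelpers


/-- If at least one of the positive integers `r`, `ℓ` is odd, then
`M = ⋃_{i=1}^{r+ℓ} {u_{2i-1}u_{2i}, v_{2i-1}v_{2i}}` is a perfect matching of the
papillon graph `P_{r,ℓ}`, no Hamiltonian cycle of `P_{r,ℓ}` has an edge set containing
`M`, and (equivalently) there is no perfect matching `N` of `P_{r,ℓ}` such that `M ∪ N`
is the edge set of a Hamiltonian cycle of `P_{r,ℓ}`. -/
theorem statement17 (r l : ℕ) (hr : 1 ≤ r) (hl : 1 ≤ l) (hodd : Odd r ∨ Odd l)
    (M : Set (Sym2 (PapVert (2 * (r + l)))))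
    (hMdef : M = {e | ∃ i, 1 ≤ i ∧ i ≤ r + l ∧
      (e = s(pu (2 * (r + l)) (2 * i - 1), pu (2 * (r + l)) (2 * i)) ∨
       e = s(pv (2 * (r + l)) (2 * i - 1), pv (2 * (r + l)) (2 * i)))}) :
    IsPerfMatching (papillon r l) M ∧
    (∀ (x : PapVert (2 * (r + l))) (c : (papillon r l).Walk x x),
        c.IsHamiltonianCycle → ¬ (M ⊆ {e | e ∈ c.edges})) ∧
    ¬ ∃ N, IsPerfMatching (papillon r l) N ∧ IsHamCycleSet (papillon r l) (M ∪ N) := by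
  subst hMdef
  haveI : NeZero (2 * (r + l)) := ⟨by omega⟩
  -- every residue is 2i-1 or 2i for some 1 ≤ i ≤ r+l
  have hrepr : ∀ j : ZMod (2*(r+l)), ∃ i, 1 ≤ i ∧ i ≤ r + l ∧
      (j = ((2*i-1 : ℕ) : ZMod (2*(r+l))) ∨ j = ((2*i : ℕ) : ZMod (2*(r+l)))) := by
    intro j
    have hval : ((j.val : ℕ) : ZMod (2*(r+l))) = j := by
      rw [ZMod.natCast_val, ZMod.cast_id]
    have hvl : j.val < 2*(r+l) := ZMod.val_lt j
    by_cases h0 : j.val = 0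
    · refine ⟨r+l, by omega, le_refl _, Or.inr ?_⟩
      rw [← hval, h0, ZMod.natCast_self]
      simp
    · refine ⟨(j.val+1)/2, by omega, by omega, ?_⟩
      have hcase : 2*((j.val+1)/2) - 1 = j.val ∨ 2*((j.val+1)/2) = j.val := by omega
      rcases hcase with h | h
      · exact Or.inl (by rw [h, hval])
      · exact Or.inr (by rw [h, hval])
  -- Part 1 : perfect matching
  have part1 : IsPerfMatching (papillon r l)
      {e | ∃ i, 1 ≤ i ∧ i ≤ r + l ∧
        (e = s(pu (2 * (r + l)) (2 * i - 1), pu (2 * (r + l)) (2 * i)) ∨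
         e = s(pv (2 * (r + l)) (2 * i - 1), pv (2 * (r + l)) (2 * i)))} := by
    constructor
    · rintro e ⟨i, hi1, hi2, hcase⟩
      rw [papillon, edgeSet_fromEdgeSet, Set.mem_diff]
      constructor
      · simp only [papillonEdges, Set.mem_setOf_eq]
        rcases hcase with rfl | rfl
        · exact Or.inl ⟨2*i-1, by omega, by omega, by rw [show 2*i-1+1 = 2*i by omega]⟩
        · exact Or.inr (Or.inr (Or.inr (Or.inl ⟨i, hi1, hi2, rfl⟩)))
      · simp only [Sym2.mem_diagSet]
        intro hd
        rcases hcase with rfl | rfl <;>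
        · rw [Sym2.mk_isDiag_iff] at hd
          have := pap_par (congrArg Prod.snd hd)
          omega
    · rintro ⟨b, j⟩
      obtain ⟨i, hi1, hi2, hj⟩ := hrepr j
      have hsucc : ((2*i : ℕ) : ZMod (2*(r+l))) = ((2*i-1 : ℕ) : ZMod (2*(r+l))) + 1 :=
        pap_cast_add_one (by omega)
      refine ⟨s(((b, ((2*i-1:ℕ) : ZMod (2*(r+l)))) : PapVert (2*(r+l))),
        ((b, ((2*i:ℕ) : ZMod (2*(r+l)))) : PapVert (2*(r+l)))), ⟨⟨i, hi1, hi2, ?_⟩, ?_⟩, ?_⟩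
      · cases b
        · exact Or.inl rfl
        · exact Or.inr rfl
      · rw [Sym2.mem_iff]
        rcases hj with rfl | rfl
        · left; rfl
        · right; rfl
      · rintro e' ⟨⟨i', hi1', hi2', hcase'⟩, hmem⟩
        have hsucc' : ((2*i' : ℕ) : ZMod (2*(r+l))) = ((2*i'-1 : ℕ) : ZMod (2*(r+l))) + 1 :=
          pap_cast_add_one (by omega)
        -- helper: from a residue match conclude the edge equality
        have key : ∀ bb : Bool,
            (((b, j) : PapVert (2*(r+l))) = (bb, ((2*i'-1:ℕ) : ZMod (2*(r+l)))) ∨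
             ((b, j) : PapVert (2*(r+l))) = (bb, ((2*i':ℕ) : ZMod (2*(r+l))))) →
            s(((bb, ((2*i'-1:ℕ) : ZMod (2*(r+l)))) : PapVert (2*(r+l))),
              ((bb, ((2*i':ℕ) : ZMod (2*(r+l)))) : PapVert (2*(r+l)))) =
            s(((b, ((2*i-1:ℕ) : ZMod (2*(r+l)))) : PapVert (2*(r+l))),
              ((b, ((2*i:ℕ) : ZMod (2*(r+l)))) : PapVert (2*(r+l)))) := by
          intro bb hm
          have hbb : b = bb := by
            rcases hm with hm | hm <;> exact congrArg Prod.fst hm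
          subst hbb
          have hodd' : ((2*i'-1 : ℕ) : ZMod (2*(r+l))) = ((2*i-1 : ℕ) : ZMod (2*(r+l))) := by
            rcases hm with hm | hm <;> rcases hj with hj | hj <;>
              (try (exact hj ▸ (congrArg Prod.snd hm).symm)) <;>
              (first
                | (exfalso
                   have h1 := (congrArg Prod.snd hm).symm.trans hj
                   have := pap_par h1
                   omega)
                | (have h1 := (congrArg Prod.snd hm).symm.trans hj
                   exact add_right_cancel ((hsucc'.symm.trans h1).trans hsucc)))
          have heven : ((2*i' : ℕ) : ZMod (2*(r+l))) = ((2*i : ℕ) : ZMod (2*(r+l))) := by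
            rw [hsucc, hsucc', hodd']
          rw [hodd', heven]
        rcases hcase' with rfl | rfl
        · have hmem' := hmem
          rw [Sym2.mem_iff] at hmem'
          exact key false hmem'
        · have hmem' := hmem
          rw [Sym2.mem_iff] at hmem'
          exact key true hmem'
  -- Part 2
  have part2 : ∀ (x : PapVert (2 * (r + l))) (c : (papillon r l).Walk x x),
      c.IsHamiltonianCycle →
      ¬ ({e | ∃ i, 1 ≤ i ∧ i ≤ r + l ∧
        (e = s(pu (2 * (r + l)) (2 * i - 1), pu (2 * (r + l)) (2 * i)) ∨
         e = s(pv (2 * (r + l)) (2 * i - 1), pv (2 * (r + l)) (2 * i)))} ⊆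
        {e | e ∈ c.edges}) := by
    intro x c hHam hMc
    have hcyc := hHam.isCycle
    have hsup : ∀ v, v ∈ c.support := fun v => hHam.mem_support v
    have hMu : ∀ i, 1 ≤ i → i ≤ r + l → pap_Mu r l i ∈ c.edges := by
      intro i h1 h2
      exact hMc ⟨i, h1, h2, Or.inl rfl⟩
    have hMv : ∀ i, 1 ≤ i → i ≤ r + l → pap_Mv r l i ∈ c.edges := by
      intro i h1 h2
      exact hMc ⟨i, h1, h2, Or.inr rfl⟩
    have hC1 : ∀ j, j + 2 ≤ r + l → j + 1 ≠ min r l →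
        ((pap_xE r l j ∈ c.edges) ↔ (pap_xE r l (j+2) ∈ c.edges)) := by
      intro j hj2 hjs
      have hO := pap_chO hr hl hcyc hsup hMu hMv (i := j+1) (by omega) (by omega)
      have hE := pap_chE hr hl hcyc hsup hMu hMv (i := j+2) (by omega) (by omega)
      have heq : pap_chordOdd r l (j+1) = pap_chordEven r l (j+2) :=
        pap_chord_eq hr hl (by omega) (by omega) hjs
      have hshift : pap_xE r l j = s(pu (2*(r+l)) (2*(j+1)-2), pu (2*(r+l)) (2*(j+1)-1)) := by
        rw [pap_xE, show 2*(j+1)-2 = 2*j by omega, show 2*j+1 = 2*(j+1)-1 by omega]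
      rw [hshift, ← hO, heq, hE]
    have hC2 : (pap_xE r l 1 ∈ c.edges) ↔ (pap_xE r l (min r l + 1) ∈ c.edges) := by
      have h1 := pap_chE hr hl hcyc hsup hMu hMv (i := 1) le_rfl (by omega)
      have h2 := pap_chE hr hl hcyc hsup hMu hMv (i := min r l + 1) (by omega) (by omega)
      rw [← h1, ← h2, pap_chord_eq2]
    have hx := pap_allEq (m := r+l) (s := min r l) (by omega) (by omega)
      (by rcases hodd with h | h <;> rw [Nat.odd_iff] at h <;> omega)
      (fun i => pap_xE r l i ∈ c.edges)
      (fun i => by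
        show pap_xE r l (i + (r+l)) ∈ c.edges ↔ pap_xE r l i ∈ c.edges
        rw [pap_xE_per]) hC1 hC2
    by_cases h0 : pap_xE r l 0 ∈ c.edges
    · -- all outer even edges used: no spokes at all
      have hxall : ∀ i, pap_xE r l i ∈ c.edges := fun i => (hx i).2 h0
      have hspoke : ∀ j : ZMod (2*(r+l)),
          s(((false, j) : PapVert (2*(r+l))), ((true, j) : PapVert (2*(r+l)))) ∉ c.edges := by
        intro j hmem
        obtain ⟨i, hi1, hi2, hj⟩ := hrepr j
        rcases hj with rfl | rfl
        · have hBi := pap_B hr hl hcyc hsup hMu hi1 hi2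
          have hgi : s(pu (2*(r+l)) (2*i-2), pu (2*(r+l)) (2*i-1)) ∈ c.edges := by
            have := hxall (i-1)
            rwa [pap_xE_shift hi1] at this
          exact (hBi.1 hgi) (by rw [pap_sO, pap_pu_def, pap_pv_def]; exact hmem)
        · have hAi := pap_A hr hl hcyc hsup hMu hi1 hi2
          exact (hAi.1 (hxall i)) (by rw [pap_sE, pap_pu_def, pap_pv_def]; exact hmem)
      have hstep : ∀ a b : PapVert (2*(r+l)), s(a,b) ∈ c.edges → a.1 = false → b.1 = false := by
        intro a b he ha
        have haa : ((false, a.2) : PapVert (2*(r+l))) = a := by rw [← ha]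
        have hj : ((false, a.2) : PapVert (2*(r+l))) ∈ s(a,b) := by
          rw [Sym2.mem_iff]; left; exact haa
        rcases pap_decodeU hr hl (pap_edges_mem he) hj with h | h | h
        · rw [Sym2.eq_iff] at h
          rcases h with ⟨-, hb⟩ | ⟨-, hb⟩ <;> rw [hb]
        · rw [Sym2.eq_iff] at h
          rcases h with ⟨-, hb⟩ | ⟨-, hb⟩ <;> rw [hb]
        · exact absurd (h ▸ he) (hspoke a.2)
      by_cases hxx : x.1 = false
      · have hcl := pap_support_closed c (fun p => p.1 = false)
          (fun a b he ha => hstep a b he ha) hxx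
        have := hcl (pv (2*(r+l)) 1) (hsup _)
        simp [pv] at this
      · have hstep' : ∀ a b : PapVert (2*(r+l)), s(a,b) ∈ c.edges →
            (¬ a.1 = false) → (¬ b.1 = false) := by
          intro a b he ha hb
          exact ha (hstep b a (by rwa [Sym2.eq_swap]) hb)
        have hcl := pap_support_closed c (fun p => ¬ p.1 = false) hstep' hxx
        exact hcl (pu (2*(r+l)) 1) (hsup _) rfl
    · -- no outer even edge used
      have hxnone : ∀ i, pap_xE r l i ∉ c.edges := fun i hc' => h0 ((hx i).1 hc')
      have hx0eq : pap_xE r l 0 = s(pu (2*(r+l)) (2*1-2), pu (2*(r+l)) (2*1-1)) := by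
        rw [pap_xE, show (2*0 : ℕ) = 2*1-2 by omega, show (2*0+1 : ℕ) = 2*1-1 by omega]
      have hsO1 : pap_sO r l 1 ∈ c.edges := by
        have hB1 := pap_B hr hl hcyc hsup hMu (i := 1) le_rfl (by omega)
        by_contra hno
        exact hxnone 0 (by rw [hx0eq]; exact hB1.2 hno)
      have hsE1 : pap_sE r l 1 ∈ c.edges := by
        have hA1 := pap_A hr hl hcyc hsup hMu (i := 1) le_rfl (by omega)
        by_contra hno
        exact hxnone 1 (hA1.2 hno)
      have hcO1 : pap_chordOdd r l 1 ∉ c.edges :=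
        (pap_D hr hl hcyc hsup hMv le_rfl (by omega)).1 hsO1
      have hcE1 : pap_chordEven r l 1 ∉ c.edges :=
        (pap_C hr hl hcyc hsup hMv le_rfl (by omega)).1 hsE1
      set P : PapVert (2*(r+l)) → Prop := fun p =>
        p = pu (2*(r+l)) 1 ∨ p = pu (2*(r+l)) 2 ∨ p = pv (2*(r+l)) 1 ∨ p = pv (2*(r+l)) 2
        with hPdef
      have hone : ((1:ℕ) : ZMod (2*(r+l))) - 1 = ((2*1-2 : ℕ) : ZMod (2*(r+l))) := by
        rw [show (2*1-2 : ℕ) = 0 by omega]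
        push_cast; ring
      have htwo : ((2:ℕ) : ZMod (2*(r+l))) = ((1:ℕ) : ZMod (2*(r+l))) + 1 :=
        pap_cast_add_one (by norm_num)
      have hstep : ∀ a b : PapVert (2*(r+l)), s(a,b) ∈ c.edges → P a → P b := by
        intro a b he ha
        rcases ha with rfl | rfl | rfl | rfl
        · -- a = pu 1
          have hj : ((false, ((1:ℕ) : ZMod (2*(r+l)))) : PapVert (2*(r+l))) ∈
              s(pu (2*(r+l)) 1, b) := by rw [Sym2.mem_iff]; left; rfl
          rcases pap_decodeU hr hl (pap_edges_mem he) hj with h | h | h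
          · exfalso
            have hxeq : pap_xE r l 0 =
                s(((false, ((1:ℕ) : ZMod (2*(r+l))) - 1) : PapVert (2*(r+l))),
                  ((false, ((1:ℕ) : ZMod (2*(r+l)))) : PapVert (2*(r+l)))) := by
              rw [hx0eq, pap_pu_def (2*1-2), pap_pu_def (2*1-1),
                show (2*1-1:ℕ) = 1 by omega, ← hone]
            exact hxnone 0 (by rw [hxeq, ← h]; exact he)
          · rw [Sym2.eq_iff] at h
            rcases h with ⟨-, hb⟩ | ⟨-, hb⟩
            · right; left; rw [hb, pap_pu_def 2, htwo]
            · left; rw [hb, pap_pu_def 1]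
          · rw [Sym2.eq_iff] at h
            rcases h with ⟨-, hb⟩ | ⟨-, hb⟩
            · right; right; left; rw [hb, pap_pv_def 1]
            · left; rw [hb, pap_pu_def 1]
        · -- a = pu 2
          have hj : ((false, ((2:ℕ) : ZMod (2*(r+l)))) : PapVert (2*(r+l))) ∈
              s(pu (2*(r+l)) 2, b) := by rw [Sym2.mem_iff]; left; rfl
          have hone2 : ((2:ℕ) : ZMod (2*(r+l))) - 1 = ((1:ℕ) : ZMod (2*(r+l))) := by
            rw [htwo]; ring
          rcases pap_decodeU hr hl (pap_edges_mem he) hj with h | h | h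
          · rw [Sym2.eq_iff] at h
            rcases h with ⟨-, hb⟩ | ⟨-, hb⟩
            · right; left; rw [hb, pap_pu_def 2]
            · left; rw [hb, pap_pu_def 1, ← hone2]
          · exfalso
            have hc3 : ((2*1 : ℕ) : ZMod (2*(r+l))) = ((2:ℕ) : ZMod (2*(r+l))) := by norm_num
            have hc4 : ((2*1+1 : ℕ) : ZMod (2*(r+l))) = ((2:ℕ) : ZMod (2*(r+l))) + 1 := by
              push_cast; ring
            have hxeq : pap_xE r l 1 =
                s(((false, ((2:ℕ) : ZMod (2*(r+l)))) : PapVert (2*(r+l))),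
                  ((false, ((2:ℕ) : ZMod (2*(r+l))) + 1) : PapVert (2*(r+l)))) := by
              rw [pap_xE, pap_pu_def (2*1), pap_pu_def (2*1+1), hc3, hc4]
            exact hxnone 1 (by rw [hxeq, ← h]; exact he)
          · rw [Sym2.eq_iff] at h
            rcases h with ⟨-, hb⟩ | ⟨-, hb⟩
            · right; right; right; rw [hb, pap_pv_def 2]
            · right; left; rw [hb, pap_pu_def 2]
        · -- a = pv 1
          have hj : pv (2*(r+l)) (2*1-1) ∈ s(pv (2*(r+l)) 1, b) := by
            rw [Sym2.mem_iff]; left; rw [show (2*1-1 : ℕ) = 1 by omega]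
          rcases pap_decodeVodd hr hl (i := 1) le_rfl (by omega) (pap_edges_mem he) hj
            with h | h | h
          · rw [show (2*1-1 : ℕ) = 1 by omega] at h
            rw [Sym2.eq_iff] at h
            rcases h with ⟨-, hb⟩ | ⟨-, hb⟩
            · right; right; left; rw [hb]
            · left; rw [hb]
          · rw [show (2*1-1 : ℕ) = 1 by omega, show (2*1 : ℕ) = 2 by omega] at h
            rw [Sym2.eq_iff] at h
            rcases h with ⟨-, hb⟩ | ⟨-, hb⟩
            · right; right; right; rw [hb]
            · right; right; left; rw [hb]
          · exact absurd (h ▸ he) hcO1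
        · -- a = pv 2
          have hj : pv (2*(r+l)) (2*1) ∈ s(pv (2*(r+l)) 2, b) := by
            rw [Sym2.mem_iff]; left; rw [show (2*1 : ℕ) = 2 by omega]
          rcases pap_decodeVeven hr hl (i := 1) le_rfl (by omega) (pap_edges_mem he) hj
            with h | h | h
          · rw [show (2*1 : ℕ) = 2 by omega] at h
            rw [Sym2.eq_iff] at h
            rcases h with ⟨-, hb⟩ | ⟨-, hb⟩
            · right; right; right; rw [hb]
            · right; left; rw [hb]
          · rw [show (2*1-1 : ℕ) = 1 by omega, show (2*1 : ℕ) = 2 by omega] at h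
            rw [Sym2.eq_iff] at h
            rcases h with ⟨-, hb⟩ | ⟨-, hb⟩
            · right; right; right; rw [hb]
            · right; right; left; rw [hb]
          · exact absurd (h ▸ he) hcE1
      by_cases hxx : P x
      · have hcl := pap_support_closed c P hstep hxx
        have h3 := hcl (pu (2*(r+l)) 3) (hsup _)
        rcases h3 with h | h | h | h
        · exact pap_cast_two_ne hr hl (show (3:ℕ) = 1 + 2 by norm_num)
            (congrArg Prod.snd h.symm)
        · have := pap_par (congrArg Prod.snd h); omega
        · exact absurd (congrArg Prod.fst h) (by simp [pu, pv])
        · exact absurd (congrArg Prod.fst h) (by simp [pu, pv])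
      · have hstep' : ∀ a b : PapVert (2*(r+l)), s(a,b) ∈ c.edges → (¬ P a) → (¬ P b) := by
          intro a b he ha hb
          exact ha (hstep b a (by rwa [Sym2.eq_swap]) hb)
        have hcl := pap_support_closed c (fun p => ¬ P p) hstep' hxx
        exact hcl (pu (2*(r+l)) 1) (hsup _) (Or.inl rfl)
  refine ⟨part1, part2, ?_⟩
  rintro ⟨Nst, hNpm, y, c, hHamc, hSet⟩
  apply part2 y c hHamc
  intro e he
  have : e ∈ {e | e ∈ c.edges} := by
    rw [← hSet]
    exact Set.mem_union_left _ he
  exact this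
end
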